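/- The one-point compactification K of the Λ-duplicate D is a scattered compact Hausdorff space which has property (*) but is not Gruenhage. -/

import Mathlib

/-- An element of Kurepa's tree `Λ`: an injective function `t : α → ω` with countable
ordinal domain `α` and coinfinite range.  The function is represented as a total function
on ordinals which takes the junk value `0` outside of the domain. -/
structure Lambda : Type 1 where
  toFun : Ordinal.{0} → ℕ
  dom : Ordinal.{0}
  countable : dom.card ≤ Cardinal.aleph0
  inj : ∀ β γ, β < dom → γ < dom → toFun β = toFun γ → β = γ
  coinfinite : {n : ℕ | ∀ β, β < dom → toFun β ≠ n}.Infinite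
  junk : ∀ β, ¬ β < dom → toFun β = 0

/-- The tree order on `Λ`: `s ≼ t` iff `t` extends `s`. -/
def Lambda.le (s t : Lambda) : Prop :=
  s.dom ≤ t.dom ∧ ∀ β, β < s.dom → s.toFun β = t.toFun β

/-- The strict tree order on `Λ`. -/
def Lambda.lt (s t : Lambda) : Prop := Lambda.le s t ∧ s ≠ t

/-- `r ≺ s` for `r ∈ Λ ∪ {0}` (`none` plays the role of the extra least element `0`). -/
def precLt : Option Lambda → Lambda → Prop
  | none, _ => True
  | some r, s => Lambda.lt r s

/-- The interval `(r, t] = {s ∈ Λ : r ≺ s ≼ t}`, with `r ∈ Λ ∪ {0}`. -/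
def lamIoc (r : Option Lambda) (t : Lambda) : Set Lambda :=
  {s | precLt r s ∧ Lambda.le s t}

/-- The position of the minimum of `t` on the ordinal interval `[δ, β)`. -/
noncomputable def minPos (t : Ordinal.{0} → ℕ) (δ β : Ordinal.{0}) : Ordinal.{0} :=
  sInf {ξ | δ ≤ ξ ∧ ξ < β ∧ ∀ η, δ ≤ η → η < β → t ξ ≤ t η}

lemma minPos_lt (t : Ordinal.{0} → ℕ) {δ β : Ordinal.{0}} (h : δ < β) : minPos t δ β < β := by
  have hne : {ξ : Ordinal.{0} | δ ≤ ξ ∧ ξ < β ∧ ∀ η, δ ≤ η → η < β → t ξ ≤ t η}.Nonempty := by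
    have h1 : {n : ℕ | ∃ ξ : Ordinal.{0}, δ ≤ ξ ∧ ξ < β ∧ t ξ = n}.Nonempty :=
      ⟨t δ, δ, le_refl _, h, rfl⟩
    obtain ⟨ξ, hξ1, hξ2, hξ3⟩ := Nat.sInf_mem h1
    refine ⟨ξ, hξ1, hξ2, fun η h1' h2' => ?_⟩
    rw [hξ3]
    exact Nat.sInf_le ⟨η, h1', h2', rfl⟩
  obtain ⟨ξ, hξ⟩ := hne
  calc minPos t δ β ≤ ξ := csInf_le (OrderBot.bddBelow _) hξ
    _ < β := hξ.2.1

/-- The sequence `τ` computed from the starting ordinal `β₀` downwards: `τ` is obtained by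
repeatedly passing from `β` to the position of the minimum of `t` on `[δ, β)`, stopping upon
reaching `δ`.  The resulting finite sequence `(β_k, …, β_1)` is recorded as a list in the
order `[β_k, …, β_1]` (so concatenation of the lists corresponds to `⌢`). -/
noncomputable def tauFrom (δ : Ordinal.{0}) (t : Ordinal.{0} → ℕ) : Ordinal.{0} → List Ordinal.{0} :=
  WellFounded.fix wellFounded_lt
    (fun β IH => if h : δ < β then IH (minPos t δ β) (minPos_lt t h) ++ [minPos t δ β] else [])

/-- The finite sequence `τ(s,t)` of ordinals, for `s ≼ t` in `Λ`. -/
noncomputable def tau (s t : Lambda) : List Ordinal.{0} :=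
  tauFrom s.dom t.toFun t.dom

/-- `ℓ(s,t)`, the length of `τ(s,t)`. -/
noncomputable def ell (s t : Lambda) : ℕ := (tau s t).length

/-- The underlying set of the `Λ`-duplicate: `D = Λ × {1, -1}`. -/
abbrev Dup : Type 1 := Lambda × ℤˣ

/-- The basic open sets `W(r,t,i)` of the `Λ`-duplicate. -/
noncomputable def Wset (r : Option Lambda) (t : Lambda) (i : ℤˣ) : Set Dup :=
  {q | q.1 ∈ lamIoc r t ∧ q.2 = (-1) ^ ell q.1 t * i}

/-- The collection of all basic open sets `W(r,t,i)` with `r ≺ t`. -/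
noncomputable def WBasis : Set (Set Dup) :=
  {S | ∃ (r : Option Lambda) (t : Lambda) (i : ℤˣ), precLt r t ∧ S = Wset r t i}

/-- The topology of the `Λ`-duplicate, generated by the basic sets `W(r,t,i)`. -/
noncomputable instance : TopologicalSpace Dup := TopologicalSpace.generateFrom WBasis

/-- Property (*) of Orihuela, Smith and Troyanski: there is a sequence `(𝒰 n)` of families of
open sets such that any two distinct points `x, y` admit `n` with `{x,y} ∩ ⋃ 𝒰 n` nonempty and
`{x,y} ∩ U` at most a singleton for every `U ∈ 𝒰 n`. -/
def HasStarProp (X : Type*) [TopologicalSpace X] : Prop :=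
  ∃ U : ℕ → Set (Set X),
    (∀ n, ∀ V ∈ U n, IsOpen V) ∧
    ∀ x y : X, x ≠ y → ∃ n,
      (({x, y} : Set X) ∩ ⋃₀ U n).Nonempty ∧
      ∀ V ∈ U n, (({x, y} : Set X) ∩ V).Subsingleton

/-- A topological space is Gruenhage if there are a sequence `(𝒰 n)` of families of open sets
and sets `R n` such that any two distinct points are separated by some member of some `𝒰 n`
(i.e. `{x,y} ∩ U` is a singleton), and two distinct members of `𝒰 n` always intersect
exactly in `R n`. -/
def Gruenhage (X : Type*) [TopologicalSpace X] : Prop :=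
  ∃ (U : ℕ → Set (Set X)) (R : ℕ → Set X),
    (∀ n, ∀ V ∈ U n, IsOpen V) ∧
    (∀ x y : X, x ≠ y → ∃ n, ∃ V ∈ U n, ∃ z, ({x, y} : Set X) ∩ V = {z}) ∧
    (∀ n, ∀ V ∈ U n, ∀ V' ∈ U n, V ≠ V' → V ∩ V' = R n)
section Basic
open Ordinal

namespace Lambda

lemma ext' {s t : Lambda} (hd : s.dom = t.dom)
    (hf : ∀ β, β < s.dom → s.toFun β = t.toFun β) : s = t := by
  cases s with | mk f d c i co j =>
  cases t with | mk f' d' c' i' co' j' =>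
  simp only [mk.injEq]
  dsimp at hd hf
  subst hd
  refine ⟨funext fun β => ?_, rfl⟩
  by_cases h : β < d
  · exact hf β h
  · rw [j β h, j' β h]

lemma le_refl (s : Lambda) : s.le s := ⟨le_rfl, fun _ _ => rfl⟩

lemma le_trans {s t u : Lambda} (h1 : s.le t) (h2 : t.le u) : s.le u :=
  ⟨h1.1.trans h2.1, fun β hβ => (h1.2 β hβ).trans (h2.2 β (hβ.trans_le h1.1))⟩

lemma eq_of_le_of_dom_le {s t : Lambda} (h : s.le t) (hd : t.dom ≤ s.dom) : s = t :=
  ext' (le_antisymm h.1 hd) h.2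

lemma lt_of_le_of_dom_lt {s t : Lambda} (h : s.le t) (hd : s.dom < t.dom) : s.lt t :=
  ⟨h, fun he => absurd (he ▸ hd) (lt_irrefl _)⟩

lemma lt.dom_lt {s t : Lambda} (h : s.lt t) : s.dom < t.dom := by
  rcases lt_or_ge s.dom t.dom with h' | h'
  · exact h'
  · exact absurd (eq_of_le_of_dom_le h.1 h') h.2

lemma lt_trans {s t u : Lambda} (h1 : s.lt t) (h2 : t.lt u) : s.lt u :=
  lt_of_le_of_dom_lt (le_trans h1.1 h2.1) (h1.dom_lt.trans h2.dom_lt)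

lemma lt_of_le_of_lt' {s t u : Lambda} (h1 : s.le t) (h2 : t.lt u) : s.lt u :=
  lt_of_le_of_dom_lt (le_trans h1 h2.1) (h1.1.trans_lt h2.dom_lt)

lemma lt_of_lt_of_le' {s t u : Lambda} (h1 : s.lt t) (h2 : t.le u) : s.lt u :=
  lt_of_le_of_dom_lt (le_trans h1.1 h2) (h1.dom_lt.trans_le h2.1)

/-- Comparability of two initial segments. -/
lemma le_of_le_le {s t u : Lambda} (h1 : s.le u) (h2 : t.le u) (hd : s.dom ≤ t.dom) :
    s.le t :=
  ⟨hd, fun β hβ => (h1.2 β hβ).trans ((h2.2 β (hβ.trans_le hd)).symm)⟩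

end Lambda

/-- The restriction of `t` to an initial part `[0, δ)` of its domain. -/
noncomputable def restrict (t : Lambda) (δ : Ordinal.{0}) (h : δ ≤ t.dom) : Lambda where
  toFun β := if β < δ then t.toFun β else 0
  dom := δ
  countable := le_trans (Ordinal.card_le_card h) t.countable
  inj := by
    intro β γ hβ hγ he
    simp only [if_pos hβ, if_pos hγ] at he
    exact t.inj β γ (hβ.trans_le h) (hγ.trans_le h) he
  coinfinite := by
    refine t.coinfinite.mono ?_
    intro n hn β hβ
    simpa only [if_pos hβ] using hn β (hβ.trans_le h)
  junk := fun β hβ => if_neg hβ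

lemma restrict_le (t : Lambda) (δ : Ordinal.{0}) (h : δ ≤ t.dom) :
    (restrict t δ h).le t := ⟨h, fun β hβ => if_pos hβ⟩

@[simp] lemma restrict_dom (t : Lambda) (δ : Ordinal.{0}) (h : δ ≤ t.dom) :
    (restrict t δ h).dom = δ := rfl

lemma restrict_toFun (t : Lambda) (δ : Ordinal.{0}) (h : δ ≤ t.dom) {β : Ordinal.{0}}
    (hβ : β < δ) : (restrict t δ h).toFun β = t.toFun β := if_pos hβ

lemma eq_restrict_of_le {s t : Lambda} (h : s.le t) : s = restrict t s.dom h.1 :=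
  Lambda.ext' rfl (fun β hβ => ((restrict_toFun t s.dom h.1 hβ).trans (h.2 β hβ).symm).symm)

lemma restrict_lt (t : Lambda) (δ : Ordinal.{0}) (h : δ < t.dom) :
    (restrict t δ h.le).lt t :=
  Lambda.lt_of_le_of_dom_lt (restrict_le t δ h.le) h

end Basic
section Walk
open Ordinal

/-- The set of "prefix minima" positions of `f` on `[δ, β)` scanning upward from `δ`. -/
def MS (δ : Ordinal.{0}) (f : Ordinal.{0} → ℕ) (β : Ordinal.{0}) : Set Ordinal.{0} :=
  {ξ | δ ≤ ξ ∧ ξ < β ∧ ∀ η, δ ≤ η → η < ξ → f ξ < f η}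

lemma minPos_mem (f : Ordinal.{0} → ℕ) {δ β : Ordinal.{0}} (h : δ < β) :
    δ ≤ minPos f δ β ∧ minPos f δ β < β ∧
      ∀ η, δ ≤ η → η < β → f (minPos f δ β) ≤ f η := by
  have hne : {ξ : Ordinal.{0} | δ ≤ ξ ∧ ξ < β ∧ ∀ η, δ ≤ η → η < β → f ξ ≤ f η}.Nonempty := by
    have h1 : {n : ℕ | ∃ ξ : Ordinal.{0}, δ ≤ ξ ∧ ξ < β ∧ f ξ = n}.Nonempty :=
      ⟨f δ, δ, le_rfl, h, rfl⟩
    obtain ⟨ξ, hξ1, hξ2, hξ3⟩ := Nat.sInf_mem h1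
    refine ⟨ξ, hξ1, hξ2, fun η h1' h2' => ?_⟩
    rw [hξ3]
    exact Nat.sInf_le ⟨η, h1', h2', rfl⟩
  exact csInf_mem hne

lemma minPos_strict (f : Ordinal.{0} → ℕ) {δ β : Ordinal.{0}} (h : δ < β) :
    ∀ η, δ ≤ η → η < minPos f δ β → f (minPos f δ β) < f η := by
  intro η h1 h2
  obtain ⟨hm1, hm2, hm3⟩ := minPos_mem f h
  have hle := hm3 η h1 (h2.trans hm2)
  rcases lt_or_eq_of_le hle with h' | h'
  · exact h'
  · exfalso
    have : η ∈ {ξ : Ordinal.{0} | δ ≤ ξ ∧ ξ < β ∧ ∀ η', δ ≤ η' → η' < β → f ξ ≤ f η'} :=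
      ⟨h1, h2.trans hm2, fun η' hη'1 hη'2 => h' ▸ hm3 η' hη'1 hη'2⟩
    exact absurd (csInf_le (OrderBot.bddBelow _) this) (not_le_of_gt h2)

lemma tauFrom_eq (δ : Ordinal.{0}) (f : Ordinal.{0} → ℕ) (β : Ordinal.{0}) :
    tauFrom δ f β = if h : δ < β
      then tauFrom δ f (minPos f δ β) ++ [minPos f δ β] else [] := by
  rw [tauFrom, WellFounded.fix_eq]

lemma mem_tauFrom_iff {δ : Ordinal.{0}} {f : Ordinal.{0} → ℕ} {β ξ : Ordinal.{0}} :
    ξ ∈ tauFrom δ f β ↔ ξ ∈ MS δ f β := by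
  induction β using WellFoundedLT.induction with
  | ind β IH =>
    rw [tauFrom_eq]
    by_cases h : δ < β
    · rw [dif_pos h]
      have hm := minPos_mem f h
      constructor
      · intro hmem
        rcases List.mem_append.1 hmem with h' | h'
        · have hξ := (IH _ (minPos_lt f h)).1 h'
          exact ⟨hξ.1, hξ.2.1.trans hm.2.1, hξ.2.2⟩
        · rw [List.mem_singleton.1 h']
          exact ⟨hm.1, hm.2.1, minPos_strict f h⟩
      · rintro ⟨h1, h2, h3⟩
        rcases lt_trichotomy ξ (minPos f δ β) with h' | h' | h'
        · exact List.mem_append.2 (Or.inl ((IH _ (minPos_lt f h)).2 ⟨h1, h', h3⟩))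
        · exact List.mem_append.2 (Or.inr (List.mem_singleton.2 h'))
        · exfalso
          exact absurd (h3 _ hm.1 h') (not_lt.2 (hm.2.2 ξ h1 h2))
    · rw [dif_neg h]
      simp only [List.not_mem_nil, false_iff]
      rintro ⟨h1, h2, -⟩
      exact h (lt_of_le_of_lt h1 h2)

lemma tauFrom_nodup (δ : Ordinal.{0}) (f : Ordinal.{0} → ℕ) (β : Ordinal.{0}) :
    (tauFrom δ f β).Nodup := by
  induction β using WellFoundedLT.induction with
  | ind β IH =>
    rw [tauFrom_eq]
    by_cases h : δ < β
    · rw [dif_pos h]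
      refine List.Nodup.append (IH _ (minPos_lt f h)) (List.nodup_singleton _) ?_
      intro x hx hx'
      rw [List.mem_singleton.1 hx'] at hx
      have := (mem_tauFrom_iff.1 hx).2.1
      exact absurd this (lt_irrefl _)
    · rw [dif_neg h]; exact List.nodup_nil

lemma MS_eq_tauFrom_toFinset (δ : Ordinal.{0}) (f : Ordinal.{0} → ℕ) (β : Ordinal.{0}) :
    MS δ f β = ↑(tauFrom δ f β).toFinset := by
  ext ξ
  rw [Finset.mem_coe, List.mem_toFinset, mem_tauFrom_iff]

lemma MS_finite (δ : Ordinal.{0}) (f : Ordinal.{0} → ℕ) (β : Ordinal.{0}) :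
    (MS δ f β).Finite := by
  rw [MS_eq_tauFrom_toFinset]; exact (tauFrom δ f β).toFinset.finite_toSet

lemma ncard_MS_eq_length (δ : Ordinal.{0}) (f : Ordinal.{0} → ℕ) (β : Ordinal.{0}) :
    (MS δ f β).ncard = (tauFrom δ f β).length := by
  rw [MS_eq_tauFrom_toFinset, Set.ncard_coe_finset,
    List.toFinset_card_of_nodup (tauFrom_nodup δ f β)]

lemma ell_eq_ncard (s t : Lambda) :
    ell s t = (MS s.dom t.toFun t.dom).ncard := by
  rw [ell, tau, ncard_MS_eq_length]

/-- `MS` only depends on the values of `f` on `[δ, β)`. -/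
lemma MS_congr {δ β : Ordinal.{0}} {f g : Ordinal.{0} → ℕ}
    (h : ∀ ξ, δ ≤ ξ → ξ < β → f ξ = g ξ) : MS δ f β = MS δ g β := by
  ext ξ
  constructor <;> rintro ⟨h1, h2, h3⟩ <;> refine ⟨h1, h2, fun η hη1 hη2 => ?_⟩
  · rw [← h ξ h1 h2, ← h η hη1 (hη2.trans h2)]; exact h3 η hη1 hη2
  · rw [h ξ h1 h2, h η hη1 (hη2.trans h2)]; exact h3 η hη1 hη2

lemma MS_inter_Iio {δ β β' : Ordinal.{0}} (h : β' ≤ β) (f : Ordinal.{0} → ℕ) :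
    MS δ f β' = MS δ f β ∩ Set.Iio β' := by
  ext ξ
  constructor
  · rintro ⟨h1, h2, h3⟩; exact ⟨⟨h1, h2.trans_le h, h3⟩, h2⟩
  · rintro ⟨⟨h1, _, h3⟩, h4⟩; exact ⟨h1, h4, h3⟩

/-- Splitting `MS δ f β` at an intermediate point `γ`. -/
lemma MS_split {δ γ β : Ordinal.{0}} (hδγ : δ ≤ γ) (hγβ : γ ≤ β) (f : Ordinal.{0} → ℕ) :
    MS δ f β = MS δ f γ ∪ {ξ ∈ MS γ f β | ∀ η, δ ≤ η → η < γ → f ξ < f η} := by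
  ext ξ
  constructor
  · rintro ⟨h1, h2, h3⟩
    rcases lt_or_ge ξ γ with h' | h'
    · exact Or.inl ⟨h1, h', h3⟩
    · exact Or.inr ⟨⟨h', h2, fun η hη1 hη2 => h3 η (hδγ.trans hη1) hη2⟩,
        fun η hη1 hη2 => h3 η hη1 (hη2.trans_le h')⟩
  · rintro (⟨h1, h2, h3⟩ | ⟨⟨h1, h2, h3⟩, h4⟩)
    · exact ⟨h1, h2.trans_le hγβ, h3⟩
    · refine ⟨hδγ.trans h1, h2, fun η hη1 hη2 => ?_⟩
      rcases lt_or_ge η γ with h' | h'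
      · exact h4 η hη1 h'
      · exact h3 η h' hη2

end Walk
section Additivity
open Ordinal

lemma ell_self (t : Lambda) : ell t t = 0 := by
  rw [ell, tau, tauFrom_eq, dif_neg (lt_irrefl _)]
  rfl

/-- Additivity of `ℓ` along `s ≼ t ≼ u`, under the condition that every walk position of
`(t,u)` has value smaller than all values of `u` on `[s.dom, t.dom)`. -/
lemma ell_add_of_cond {s t u : Lambda} (hst : s.le t) (htu : t.le u)
    (hcond : ∀ ξ ∈ MS t.dom u.toFun u.dom,
      ∀ η, s.dom ≤ η → η < t.dom → u.toFun ξ < u.toFun η) :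
    ell s u = ell s t + ell t u := by
  rw [ell_eq_ncard, ell_eq_ncard, ell_eq_ncard]
  have hsplit := MS_split hst.1 htu.1 u.toFun
  have h2 : {ξ ∈ MS t.dom u.toFun u.dom |
      ∀ η, s.dom ≤ η → η < t.dom → u.toFun ξ < u.toFun η} = MS t.dom u.toFun u.dom := by
    ext ξ
    exact ⟨fun h => h.1, fun h => ⟨h, hcond ξ h⟩⟩
  rw [h2] at hsplit
  have hcongr : MS s.dom u.toFun t.dom = MS s.dom t.toFun t.dom :=
    MS_congr (fun ξ _ hξ => (htu.2 ξ hξ).symm)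
  rw [hsplit, Set.ncard_union_eq ?disj (hcongr ▸ MS_finite _ _ _) (MS_finite _ _ _), hcongr]
  case disj =>
    refine Set.disjoint_left.2 ?_
    rintro ξ ⟨-, h2', -⟩ ⟨h1'', -, -⟩
    exact absurd (h1''.trans_lt h2') (lt_irrefl _)

/-- Existence of a threshold below a limit `t.dom` beyond which `ℓ` is additive. -/
lemma exists_threshold {t u : Lambda} (htu : t.le u) (h0 : 0 < t.dom)
    (hlim : ∀ γ, γ < t.dom → γ + 1 < t.dom) :
    ∃ γ, γ < t.dom ∧ ∀ s : Lambda, s.le t → γ ≤ s.dom →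
      ell s u = ell s t + ell t u := by
  obtain ⟨N, hN⟩ := ((MS_finite t.dom u.toFun u.dom).image u.toFun).bddAbove
  set P : Set Ordinal.{0} := {η | η < t.dom ∧ u.toFun η ≤ N} with hP
  have hPfin : P.Finite := by
    have himg : (u.toFun '' P).Finite := (Set.finite_Iic N).subset (by
      rintro x ⟨η, hη, rfl⟩; exact hη.2)
    refine Set.Finite.of_finite_image himg ?_
    intro a ha b hb hab
    exact u.inj a b (ha.1.trans_le htu.1) (hb.1.trans_le htu.1) hab
  have hPfin' : ((fun η => η + 1) '' P).Finite := hPfin.image _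
  set γ : Ordinal.{0} := sSup ((fun η => η + 1) '' P) with hγ
  have hγlt : γ < t.dom := by
    rcases Set.eq_empty_or_nonempty P with he | hne
    · rw [hγ, he]
      simpa using h0
    · have : γ ∈ (fun η => η + 1) '' P := (hne.image _).csSup_mem hPfin'
      obtain ⟨η, hη, hηe⟩ := this
      rw [← hηe]
      exact hlim η hη.1
  refine ⟨γ, hγlt, fun s hs hγs => ?_⟩
  refine ell_add_of_cond hs htu ?_
  intro ξ hξ η hη1 hη2
  have hηP : η ∉ P := by
    intro hmem
    have : η + 1 ≤ γ := le_csSup hPfin'.bddAbove ⟨η, hmem, rfl⟩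
    exact absurd ((Order.add_one_le_iff.1 this).trans_le hγs) (not_lt.2 hη1)
  have : ¬ u.toFun η ≤ N := fun hle => hηP ⟨hη2, hle⟩
  exact lt_of_le_of_lt (hN ⟨ξ, hξ, rfl⟩) (not_le.1 this)

end Additivity

section Nbhd
open TopologicalSpace

/-- The domain of an element of `Λ ∪ {0}`. -/
def domOpt : Option Lambda → Ordinal.{0}
  | none => 0
  | some r => r.dom

lemma precLt_none (s : Lambda) : precLt none s := trivial

lemma precLt_dom_lt {r : Option Lambda} {t : Lambda} (h : precLt r t) (h0 : 0 < t.dom) :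
    domOpt r < t.dom := by
  cases r with
  | none => exact h0
  | some r => exact h.dom_lt

lemma precLt_of_le {q : Option Lambda} {s t : Lambda} (hq : precLt q t) (hst : s.le t)
    (hd : domOpt q < s.dom) : precLt q s := by
  cases q with
  | none => trivial
  | some r =>
    exact ⟨Lambda.le_of_le_le hq.1 hst hd.le,
      fun he => absurd (he ▸ hd) (lt_irrefl _)⟩

lemma mem_Wset_iff {p : Dup} {r : Option Lambda} {t : Lambda} {i : ℤˣ} :
    p ∈ Wset r t i ↔ (precLt r p.1 ∧ p.1.le t) ∧ p.2 = (-1) ^ ell p.1 t * i :=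
  Iff.rfl

/-- Monotonicity of `Wset` in the lower endpoint. -/
lemma Wset_anti {q q' : Option Lambda} {t : Lambda} {i : ℤˣ}
    (h : ∀ s : Lambda, precLt q' s → s.le t → precLt q s) :
    Wset q' t i ⊆ Wset q t i := by
  rintro ⟨s, j⟩ ⟨⟨h1, h2⟩, h3⟩
  exact ⟨⟨h s h1 h2, h2⟩, h3⟩

lemma isOpen_iff_dup {U : Set Dup} : IsOpen U ↔ GenerateOpen WBasis U := Iff.rfl

lemma isOpen_Wset {r : Option Lambda} {t : Lambda} {i : ℤˣ} (h : precLt r t) :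
    IsOpen (Wset r t i) :=
  isOpen_iff_dup.2 (GenerateOpen.basic _ ⟨r, t, i, h, rfl⟩)

lemma mem_Wset_self {t : Lambda} {i : ℤˣ} {r : Option Lambda} (h : precLt r t) :
    (⟨t, i⟩ : Dup) ∈ Wset r t i := by
  refine ⟨⟨h, Lambda.le_refl t⟩, ?_⟩
  rw [ell_self, pow_zero, one_mul]

/-- Basic neighbourhoods: every open set around `(t,i)` contains a `W(q,t,i)`. -/
lemma exists_Wset_subset {U : Set Dup} (hU : IsOpen U) {t : Lambda} {i : ℤˣ}
    (ht : (⟨t, i⟩ : Dup) ∈ U) : ∃ q, precLt q t ∧ Wset q t i ⊆ U := by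
  rw [isOpen_iff_dup] at hU
  induction hU generalizing i with
  | basic S hS =>
    obtain ⟨r, u, k, hru, rfl⟩ := hS
    obtain ⟨⟨hrt, htu⟩, hik⟩ := ht
    dsimp only at hrt htu hik
    rcases le_or_gt u.dom t.dom with hd | hd
    · -- t = u
      have he : t = u := Lambda.eq_of_le_of_dom_le htu hd
      subst he
      rw [ell_self, pow_zero, one_mul] at hik
      subst hik
      exact ⟨r, hrt, subset_rfl⟩
    · -- t ≺ u
      rcases eq_or_lt_of_le (zero_le (a := t.dom)) with h0 | h0
      · -- dom t = 0
        refine ⟨none, trivial, ?_⟩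
        rintro ⟨s, j⟩ ⟨⟨-, hst⟩, hj⟩
        have hs : s = t := Lambda.eq_of_le_of_dom_le hst (h0 ▸ zero_le (a := s.dom))
        subst hs
        rw [ell_self, pow_zero, one_mul] at hj
        subst hj
        exact ⟨⟨hrt, htu⟩, hik⟩
      by_cases hlim : ∀ γ, γ < t.dom → γ + 1 < t.dom
      · -- dom t limit
        obtain ⟨γ₀, hγ₀, hthr⟩ := exists_threshold htu h0 hlim
        set γ' : Ordinal.{0} := max γ₀ (domOpt r) with hγ'
        have hγ'lt : γ' < t.dom := max_lt hγ₀ (precLt_dom_lt hrt h0)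
        refine ⟨some (restrict t γ' hγ'lt.le), restrict_lt t γ' hγ'lt, ?_⟩
        rintro ⟨s, j⟩ ⟨⟨h1, h2⟩, h3⟩
        dsimp only at h1 h2 h3 ⊢
        have hsd : γ' < s.dom := h1.dom_lt
        have hst : s.le u := Lambda.le_trans h2 htu
        have hadd := hthr s h2 ((le_max_left _ _).trans hsd.le)
        refine ⟨⟨?_, hst⟩, ?_⟩
        · exact precLt_of_le hrt h2 (lt_of_le_of_lt (le_max_right _ _) hsd)
        · rw [h3, hik, hadd, pow_add, mul_assoc]
      · -- dom t successor
        push_neg at hlim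
        obtain ⟨γ, hγlt, hγsucc⟩ := hlim
        have hsucc : γ + 1 = t.dom :=
          le_antisymm (Order.add_one_le_iff.2 hγlt) hγsucc
        refine ⟨some (restrict t γ hγlt.le), restrict_lt t γ hγlt, ?_⟩
        rintro ⟨s, j⟩ ⟨⟨h1, h2⟩, h3⟩
        dsimp only at h1 h2 h3 ⊢
        have hsd : γ < s.dom := h1.dom_lt
        have hs : s = t := Lambda.eq_of_le_of_dom_le h2
          (by rw [← hsucc]; exact Order.add_one_le_iff.2 hsd)
        subst hs
        rw [ell_self, pow_zero, one_mul] at h3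
        subst h3
        exact ⟨⟨hrt, htu⟩, hik⟩
  | univ => exact ⟨none, trivial, fun _ _ => trivial⟩
  | inter S S' _ _ IH IH' =>
    obtain ⟨q1, hq1, hsub1⟩ := IH ht.1
    obtain ⟨q2, hq2, hsub2⟩ := IH' ht.2
    cases q1 with
    | none =>
      exact ⟨q2, hq2, fun p hp =>
        ⟨hsub1 (Wset_anti (fun s _ _ => precLt_none s) hp), hsub2 hp⟩⟩
    | some r1 =>
      cases q2 with
      | none =>
        exact ⟨some r1, hq1, fun p hp =>
          ⟨hsub1 hp, hsub2 (Wset_anti (fun s _ _ => precLt_none s) hp)⟩⟩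
      | some r2 =>
        rcases le_or_gt r1.dom r2.dom with hle | hlt
        · refine ⟨some r2, hq2, fun p hp =>
            ⟨hsub1 (Wset_anti (fun s h1 _ => ?_) hp), hsub2 hp⟩⟩
          exact Lambda.lt_of_le_of_lt' (Lambda.le_of_le_le hq1.1 hq2.1 hle) h1
        · refine ⟨some r1, hq1, fun p hp =>
            ⟨hsub1 hp, hsub2 (Wset_anti (fun s h1 _ => ?_) hp)⟩⟩
          exact Lambda.lt_of_le_of_lt' (Lambda.le_of_le_le hq2.1 hq1.1 hlt.le) h1
  | sUnion S hS IH =>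
    obtain ⟨V, hV, htV⟩ := ht
    obtain ⟨q, hq, hsub⟩ := IH V hV htV
    exact ⟨q, hq, fun p hp => ⟨V, hV, hsub hp⟩⟩

end Nbhd
section T2LC
open Ordinal TopologicalSpace

instance : T2Space Dup := by
  constructor
  rintro ⟨s, i⟩ ⟨t, j⟩ hne
  rcases eq_or_ne s t with rfl | hst
  · -- same node, different signs
    have hij : i ≠ j := fun h => hne (by rw [h])
    refine ⟨Wset none s i, Wset none s j, isOpen_Wset (precLt_none s),
      isOpen_Wset (precLt_none s), mem_Wset_self (precLt_none s),
      mem_Wset_self (precLt_none s), ?_⟩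
    refine Set.disjoint_left.2 ?_
    rintro ⟨v, l⟩ ⟨-, h2⟩ ⟨-, h4⟩
    exact hij (mul_left_cancel ((h2.symm.trans h4 : _)))
  by_cases hle : s.le t
  · -- s ≺ t
    have hlt : s.lt t := ⟨hle, hst⟩
    refine ⟨Wset none s i, Wset (some s) t j, isOpen_Wset (precLt_none s),
      isOpen_Wset hlt, mem_Wset_self (precLt_none s), mem_Wset_self hlt, ?_⟩
    refine Set.disjoint_left.2 ?_
    rintro ⟨v, l⟩ ⟨⟨-, h2⟩, -⟩ ⟨⟨h3, -⟩, -⟩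
    exact absurd (Lambda.lt_of_lt_of_le' h3 h2) (fun h => h.2 rfl)
  by_cases hle' : t.le s
  · -- t ≺ s
    have hlt : t.lt s := ⟨hle', Ne.symm hst⟩
    refine ⟨Wset (some t) s i, Wset none t j, isOpen_Wset hlt,
      isOpen_Wset (precLt_none t), mem_Wset_self hlt, mem_Wset_self (precLt_none t), ?_⟩
    refine Set.disjoint_left.2 ?_
    rintro ⟨v, l⟩ ⟨⟨h1, -⟩, -⟩ ⟨⟨-, h4⟩, -⟩
    exact absurd (Lambda.lt_of_lt_of_le' h1 h4) (fun h => h.2 rfl)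
  · -- incomparable
    rcases le_total s.dom t.dom with hd | hd
    · have hB : {β : Ordinal.{0} | β < s.dom ∧ s.toFun β ≠ t.toFun β}.Nonempty := by
        by_contra hemp
        refine hle ⟨hd, fun β hβ => ?_⟩
        by_contra hne'
        exact hemp ⟨β, hβ, hne'⟩
      have hδmem : sInf {β : Ordinal.{0} | β < s.dom ∧ s.toFun β ≠ t.toFun β} ∈
          {β : Ordinal.{0} | β < s.dom ∧ s.toFun β ≠ t.toFun β} := csInf_mem hB
      set δ := sInf {β : Ordinal.{0} | β < s.dom ∧ s.toFun β ≠ t.toFun β} with hδ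
      have hδmin : ∀ β, β < δ → β < s.dom → s.toFun β = t.toFun β := by
        intro β hβ hβs
        by_contra hne'
        have hle'' : sInf {β : Ordinal.{0} | β < s.dom ∧ s.toFun β ≠ t.toFun β} ≤ β :=
          csInf_le (OrderBot.bddBelow _) ⟨hβs, hne'⟩
        rw [← hδ] at hle''
        exact absurd hle'' (not_le_of_gt hβ)
      have hδs : δ < s.dom := hδmem.1
      have hrs : (restrict s δ hδs.le).lt s := restrict_lt s δ hδs
      have hrt : (restrict s δ hδs.le).lt t := by
        refine Lambda.lt_of_le_of_dom_lt ⟨hδs.le.trans hd, fun β hβ => ?_⟩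
          (hδs.trans_le hd)
        rw [restrict_toFun s δ hδs.le hβ]
        exact hδmin β hβ (hβ.trans hδs)
      refine ⟨Wset (some (restrict s δ hδs.le)) s i, Wset (some (restrict s δ hδs.le)) t j,
        isOpen_Wset hrs, isOpen_Wset hrt, mem_Wset_self hrs, mem_Wset_self hrt, ?_⟩
      refine Set.disjoint_left.2 ?_
      rintro ⟨v, l⟩ ⟨⟨h1, h2⟩, -⟩ ⟨⟨h3, h4⟩, -⟩
      have hδv : δ < v.dom := h1.dom_lt
      exact hδmem.2 (by rw [← h2.2 δ hδv, ← h4.2 δ hδv])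
    · have hB : {β : Ordinal.{0} | β < t.dom ∧ t.toFun β ≠ s.toFun β}.Nonempty := by
        by_contra hemp
        refine hle' ⟨hd, fun β hβ => ?_⟩
        by_contra hne'
        exact hemp ⟨β, hβ, hne'⟩
      have hδmem : sInf {β : Ordinal.{0} | β < t.dom ∧ t.toFun β ≠ s.toFun β} ∈
          {β : Ordinal.{0} | β < t.dom ∧ t.toFun β ≠ s.toFun β} := csInf_mem hB
      set δ := sInf {β : Ordinal.{0} | β < t.dom ∧ t.toFun β ≠ s.toFun β} with hδ
      have hδmin : ∀ β, β < δ → β < t.dom → t.toFun β = s.toFun β := by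
        intro β hβ hβs
        by_contra hne'
        have hle'' : sInf {β : Ordinal.{0} | β < t.dom ∧ t.toFun β ≠ s.toFun β} ≤ β :=
          csInf_le (OrderBot.bddBelow _) ⟨hβs, hne'⟩
        rw [← hδ] at hle''
        exact absurd hle'' (not_le_of_gt hβ)
      have hδt : δ < t.dom := hδmem.1
      have hrt : (restrict t δ hδt.le).lt t := restrict_lt t δ hδt
      have hrs : (restrict t δ hδt.le).lt s := by
        refine Lambda.lt_of_le_of_dom_lt ⟨hδt.le.trans hd, fun β hβ => ?_⟩
          (hδt.trans_le hd)
        rw [restrict_toFun t δ hδt.le hβ]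
        exact hδmin β hβ (hβ.trans hδt)
      refine ⟨Wset (some (restrict t δ hδt.le)) s i, Wset (some (restrict t δ hδt.le)) t j,
        isOpen_Wset hrs, isOpen_Wset hrt, mem_Wset_self hrs, mem_Wset_self hrt, ?_⟩
      refine Set.disjoint_left.2 ?_
      rintro ⟨v, l⟩ ⟨⟨h1, h2⟩, -⟩ ⟨⟨h3, h4⟩, -⟩
      have hδv : δ < v.dom := h1.dom_lt
      exact hδmem.2 (by rw [← h2.2 δ hδv, ← h4.2 δ hδv])

/-- Compact building blocks: tails of the branch below `u` with signs twisted by `t`. -/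
noncomputable def Vset (q : Option Lambda) (u t : Lambda) (i : ℤˣ) : Set Dup :=
  {p | p.1 ∈ lamIoc q u ∧ p.2 = (-1) ^ ell p.1 t * i}

lemma Wset_eq_Vset (q : Option Lambda) (t : Lambda) (i : ℤˣ) :
    Wset q t i = Vset q t t i := rfl

lemma Vset_split {q : Option Lambda} {u t : Lambda} {i : ℤˣ} {r : Lambda} (hr : r.le u)
    (hq : precLt q u) (hd : domOpt q ≤ r.dom) :
    Vset q u t i = Vset q r t i ∪ Vset (some r) u t i := by
  ext ⟨s, j⟩
  constructor
  · rintro ⟨⟨h1, h2⟩, h3⟩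
    rcases le_or_gt s.dom r.dom with h' | h'
    · exact Or.inl ⟨⟨h1, Lambda.le_of_le_le h2 hr h'⟩, h3⟩
    · exact Or.inr ⟨⟨Lambda.lt_of_le_of_dom_lt (Lambda.le_of_le_le hr h2 h'.le) h', h2⟩, h3⟩
  · rintro (⟨⟨h1, h2⟩, h3⟩ | ⟨⟨h1, h2⟩, h3⟩)
    · exact ⟨⟨h1, Lambda.le_trans h2 hr⟩, h3⟩
    · refine ⟨⟨?_, h2⟩, h3⟩
      cases q with
      | none => exact precLt_none s
      | some r₀ =>
        exact Lambda.lt_of_le_of_dom_lt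
          (Lambda.le_of_le_le hq.1 h2 (hd.trans h1.dom_lt.le))
          (lt_of_le_of_lt hd h1.dom_lt)

lemma Vset_isCompact : ∀ (d : Ordinal.{0}) (u : Lambda), u.dom = d → ∀ (t : Lambda),
    u.le t → ∀ (q : Option Lambda) (i : ℤˣ), IsCompact (Vset q u t i) := by
  intro d
  induction d using WellFoundedLT.induction with
  | ind d IH =>
  rintro u rfl t hut q i
  by_cases hq : precLt q u
  swap
  · convert isCompact_empty
    ext ⟨s, j⟩
    simp only [Set.mem_empty_iff_false, iff_false]
    rintro ⟨⟨h1, h2⟩, -⟩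
    cases q with
    | none => exact hq (precLt_none u)
    | some r => exact hq (Lambda.lt_of_lt_of_le' h1 h2)
  rw [isCompact_iff_finite_subcover]
  intro ι C hC hcover
  classical
  have hxmem : (⟨u, (-1) ^ ell u t * i⟩ : Dup) ∈ Vset q u t i :=
    ⟨⟨hq, Lambda.le_refl u⟩, rfl⟩
  obtain ⟨j₀, hj₀⟩ := Set.mem_iUnion.1 (hcover hxmem)
  obtain ⟨q₁, hq₁, hsub₁⟩ := exists_Wset_subset (hC j₀) hj₀
  rcases eq_or_lt_of_le (zero_le (a := u.dom)) with h0 | h0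
  · -- dom u = 0 : Vset ⊆ C j₀
    refine ⟨{j₀}, ?_⟩
    rintro ⟨s, j⟩ ⟨⟨h1, h2⟩, h3⟩
    have hs : s = u := Lambda.eq_of_le_of_dom_le h2 (h0 ▸ zero_le (a := s.dom))
    subst hs
    simp only [Set.mem_iUnion]
    refine ⟨j₀, Finset.mem_singleton_self j₀, hsub₁ ⟨⟨hq₁, Lambda.le_refl s⟩, ?_⟩⟩
    rw [ell_self, pow_zero, one_mul]
    exact h3
  have key : ∃ r : Lambda, r.le u ∧ r.dom < u.dom ∧ domOpt q ≤ r.dom ∧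
      Vset (some r) u t i ⊆ C j₀ := by
    by_cases hlim : ∀ γ, γ < u.dom → γ + 1 < u.dom
    · obtain ⟨γ₀, hγ₀, hthr⟩ := exists_threshold hut h0 hlim
      have hγlt : max (max γ₀ (domOpt q)) (domOpt q₁) < u.dom :=
        max_lt (max_lt hγ₀ (precLt_dom_lt hq h0)) (precLt_dom_lt hq₁ h0)
      refine ⟨restrict u _ hγlt.le, restrict_le u _ hγlt.le, hγlt,
        (le_max_right _ _).trans (le_max_left _ _), ?_⟩
      rintro ⟨s, j⟩ ⟨⟨h1, h2⟩, h3⟩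
      refine hsub₁ ⟨⟨precLt_of_le hq₁ h2
        (lt_of_le_of_lt (le_max_right _ _) h1.dom_lt), h2⟩, ?_⟩
      have hadd := hthr s h2
        (((le_max_left _ _).trans (le_max_left _ _)).trans h1.dom_lt.le)
      rw [h3, hadd, pow_add, mul_assoc]
    · push_neg at hlim
      obtain ⟨γ, hγlt, hγsucc⟩ := hlim
      have hsucc : γ + 1 = u.dom := le_antisymm (Order.add_one_le_iff.2 hγlt) hγsucc
      have hdq : domOpt q ≤ γ := by
        have h' := precLt_dom_lt hq h0
        rw [← hsucc] at h'
        exact Order.lt_add_one_iff.1 h'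
      refine ⟨restrict u γ hγlt.le, restrict_le u γ hγlt.le, hγlt, hdq, ?_⟩
      rintro ⟨s, j⟩ ⟨⟨h1, h2⟩, h3⟩
      have hs : s = u := Lambda.eq_of_le_of_dom_le h2
        (by rw [← hsucc]; exact Order.add_one_le_iff.2 h1.dom_lt)
      subst hs
      refine hsub₁ ⟨⟨hq₁, Lambda.le_refl s⟩, ?_⟩
      rw [ell_self, pow_zero, one_mul]
      exact h3
  obtain ⟨r, hrle, hrlt, hdq, hsecond⟩ := key
  have hsplit := Vset_split (q := q) (t := t) (i := i) hrle hq hdq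
  have hfirst := IH r.dom hrlt r rfl t (Lambda.le_trans hrle hut) q i
  obtain ⟨s₁, hs₁⟩ := (isCompact_iff_finite_subcover.1 hfirst) C hC
    (fun p hp => hcover (hsplit ▸ Or.inl hp))
  refine ⟨insert j₀ s₁, ?_⟩
  rw [hsplit]
  rintro p (hp | hp)
  · obtain ⟨j', hj'⟩ := Set.mem_iUnion.1 (hs₁ hp)
    simp only [Set.mem_iUnion] at hj' ⊢
    obtain ⟨hj'', hmem⟩ := hj'
    exact ⟨j', Finset.mem_insert_of_mem hj'', hmem⟩
  · simp only [Set.mem_iUnion]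
    exact ⟨j₀, Finset.mem_insert_self _ _, hsecond hp⟩

instance : LocallyCompactSpace Dup := by
  constructor
  rintro ⟨t, i⟩ n hn
  obtain ⟨U, hUn, hUopen, hU⟩ := mem_nhds_iff.1 hn
  obtain ⟨q, hq, hsub⟩ := exists_Wset_subset hUopen hU
  refine ⟨Wset q t i, (isOpen_Wset hq).mem_nhds (mem_Wset_self hq),
    fun p hp => hUn (hsub hp), ?_⟩
  rw [Wset_eq_Vset]
  exact Vset_isCompact t.dom t rfl t (Lambda.le_refl t) q i

example : T2Space (OnePoint Dup) := inferInstance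

end T2LC
section Scattered
open Ordinal

lemma chain_comparable {s t u : Lambda} (hs : s.le u) (ht : t.le u) : s.le t ∨ t.le s := by
  rcases le_total s.dom t.dom with h | h
  · exact Or.inl (Lambda.le_of_le_le hs ht h)
  · exact Or.inr (Lambda.le_of_le_le ht hs h)

lemma scattered_onePoint : ∀ E : Set (OnePoint Dup), E.Nonempty →
    ∃ x ∈ E, ∃ U : Set (OnePoint Dup), IsOpen U ∧ U ∩ E = {x} := by
  intro E hE
  by_cases hD : ∃ p : Dup, (p : OnePoint Dup) ∈ E
  · -- pick a point of minimal domain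
    have hDne : {d : Ordinal.{0} | ∃ p : Dup, (p : OnePoint Dup) ∈ E ∧ p.1.dom = d}.Nonempty := by
      obtain ⟨p, hp⟩ := hD
      exact ⟨p.1.dom, p, hp, rfl⟩
    obtain ⟨⟨t, i⟩, htE, htd⟩ := csInf_mem hDne
    dsimp only at htd
    refine ⟨((⟨t, i⟩ : Dup) : OnePoint Dup), htE,
      (fun p : Dup => (p : OnePoint Dup)) '' Wset none t i,
      OnePoint.isOpen_image_coe.2 (isOpen_Wset (precLt_none t)), ?_⟩
    ext y
    constructor
    · rintro ⟨⟨⟨s, j⟩, ⟨⟨-, hle⟩, hsign⟩, rfl⟩, hyE⟩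
      have hmin : sInf {d : Ordinal.{0} | ∃ p : Dup, (p : OnePoint Dup) ∈ E ∧ p.1.dom = d}
          ≤ s.dom := csInf_le (OrderBot.bddBelow _) ⟨⟨s, j⟩, hyE, rfl⟩
      rw [← htd] at hmin
      dsimp only at hle hsign
      have hst : s = t := Lambda.eq_of_le_of_dom_le hle hmin
      subst hst
      rw [ell_self, pow_zero, one_mul] at hsign
      subst hsign
      rfl
    · rintro rfl
      exact ⟨⟨⟨t, i⟩, mem_Wset_self (precLt_none t), rfl⟩, htE⟩
  · -- E = {∞}
    obtain ⟨y, hy⟩ := hE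
    have hyi : y = (OnePoint.infty : OnePoint Dup) := by
      cases y with
      | infty => rfl
      | coe p => exact absurd ⟨p, hy⟩ hD
    subst hyi
    refine ⟨OnePoint.infty, hy, Set.univ, isOpen_univ, ?_⟩
    ext z
    simp only [Set.univ_inter, Set.mem_singleton_iff]
    constructor
    · intro hz
      cases z with
      | infty => rfl
      | coe p => exact absurd ⟨p, hz⟩ hD
    · rintro rfl; exact hy

end Scattered

section Star
open Ordinal

/-- The families of open sets witnessing property (*). -/
noncomputable def UU : ℕ → Set (Set (OnePoint Dup))
  | 0 => {S | ∃ r t i, precLt r t ∧ S = (fun p : Dup => (p : OnePoint Dup)) '' Wset r t i}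
  | (m+1) => {S | ∃ (t : Lambda) (i : ℤˣ) (r : Lambda), Lambda.lt r t ∧
        (∃ ξ, ξ < r.dom ∧ t.toFun ξ = m) ∧
        S = (fun p : Dup => (p : OnePoint Dup)) '' Wset (some r) t i} ∪
      {S | ∃ p : OnePoint Dup, S = {p} ∧ IsOpen S}

lemma UU_open : ∀ n, ∀ V ∈ UU n, IsOpen V := by
  rintro (_ | m) V hV
  · obtain ⟨r, t, i, h, rfl⟩ := hV
    exact OnePoint.isOpen_image_coe.2 (isOpen_Wset h)
  · rcases hV with ⟨t, i, r, h, -, rfl⟩ | ⟨p, rfl, hopen⟩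
    · exact OnePoint.isOpen_image_coe.2 (isOpen_Wset h)
    · exact hopen

lemma pair_inter_subsingleton {x y : OnePoint Dup} {V : Set (OnePoint Dup)}
    (h : ¬ (x ∈ V ∧ y ∈ V)) : (({x, y} : Set (OnePoint Dup)) ∩ V).Subsingleton := by
  rintro a ⟨ha1, ha2⟩ b ⟨hb1, hb2⟩
  rcases ha1 with rfl | rfl <;> rcases hb1 with rfl | rfl
  · rfl
  · exact absurd ⟨ha2, hb2⟩ h
  · exact absurd ⟨hb2, ha2⟩ h
  · rfl

lemma coe_mem_image_iff {p : Dup} {W : Set Dup} :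
    ((p : OnePoint Dup) ∈ (fun q : Dup => (q : OnePoint Dup)) '' W) ↔ p ∈ W := by
  constructor
  · rintro ⟨q, hq, he⟩
    rwa [show q = p from Option.some_injective _ he] at hq
  · intro hp
    exact ⟨p, hp, rfl⟩

/-- The separation for the case of two comparable distinct nodes: the family `UU (m+1)`
where `m` is the minimal value of `t` on `[s.dom, t.dom)`. -/
lemma star_sep_lt {s t : Lambda} (i j : ℤˣ) (hst : s.lt t) :
    ∃ n, ((({((⟨s, i⟩ : Dup) : OnePoint Dup), ((⟨t, j⟩ : Dup) : OnePoint Dup)} :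
        Set (OnePoint Dup)) ∩ ⋃₀ UU n).Nonempty) ∧
      ∀ V ∈ UU n, ((({((⟨s, i⟩ : Dup) : OnePoint Dup), ((⟨t, j⟩ : Dup) : OnePoint Dup)} :
        Set (OnePoint Dup)) ∩ V)).Subsingleton := by
  have hd := hst.dom_lt
  obtain ⟨hξ1, hξ2, hξ3⟩ := minPos_mem t.toFun hd
  set ξ₀ := minPos t.toFun s.dom t.dom with hξ₀
  refine ⟨t.toFun ξ₀ + 1, ?_, ?_⟩
  · -- covering: y is in some member
    rcases eq_or_lt_of_le (Order.add_one_le_iff.2 hξ2) with hsucc | hlt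
    · -- ξ₀ + 1 = t.dom : isolated point, use the singleton member
      have hsing : ({((⟨t, j⟩ : Dup) : OnePoint Dup)} : Set (OnePoint Dup)) =
          (fun p : Dup => (p : OnePoint Dup)) '' Wset (some (restrict t ξ₀ hξ2.le)) t j := by
        ext z
        constructor
        · rintro rfl
          exact ⟨⟨t, j⟩, mem_Wset_self (restrict_lt t ξ₀ hξ2), rfl⟩
        · rintro ⟨⟨u, l⟩, ⟨⟨h1, h2⟩, h3⟩, rfl⟩
          have hu : u = t := Lambda.eq_of_le_of_dom_le h2
            (by rw [← hsucc]; exact Order.add_one_le_iff.2 h1.dom_lt)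
          subst hu
          rw [ell_self, pow_zero, one_mul] at h3
          dsimp only at h3
          subst h3
          rfl
      refine ⟨((⟨t, j⟩ : Dup) : OnePoint Dup), Set.mem_insert_of_mem _ rfl, ?_⟩
      refine ⟨{((⟨t, j⟩ : Dup) : OnePoint Dup)}, Or.inr ⟨_, rfl, ?_⟩, rfl⟩
      rw [hsing]
      exact OnePoint.isOpen_image_coe.2 (isOpen_Wset (restrict_lt t ξ₀ hξ2))
    · -- ξ₀ + 1 < t.dom : use the certified member
      refine ⟨((⟨t, j⟩ : Dup) : OnePoint Dup), Set.mem_insert_of_mem _ rfl,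
        (fun p : Dup => (p : OnePoint Dup)) '' Wset (some (restrict t (ξ₀+1) hlt.le)) t j,
        Or.inl ⟨t, j, restrict t (ξ₀+1) hlt.le, restrict_lt t (ξ₀+1) hlt,
          ⟨ξ₀, ?_, rfl⟩, rfl⟩, ?_⟩
      · rw [restrict_dom]
        exact Order.lt_add_one_iff.2 le_rfl
      · exact coe_mem_image_iff.2 (mem_Wset_self (restrict_lt t (ξ₀+1) hlt))
  · -- subsingleton: no member contains both
    rintro V (⟨u', k, r, hru, ⟨ξ, hξr, hξval⟩, rfl⟩ | ⟨p, rfl, -⟩)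
    · refine pair_inter_subsingleton ?_
      rintro ⟨hx, hy⟩
      obtain ⟨⟨hx1, hx2⟩, -⟩ := coe_mem_image_iff.1 hx
      obtain ⟨⟨hy1, hy2⟩, -⟩ := coe_mem_image_iff.1 hy
      dsimp only at hx1 hx2 hy1 hy2
      -- s, t ∈ (r, u'] and the certificate gives a contradiction
      have hm : u'.toFun ξ = t.toFun ξ₀ := hξval
      have htu' : t.toFun ξ₀ = u'.toFun ξ₀ := hy2.2 ξ₀ hξ2
      have hξξ₀ : ξ = ξ₀ := by
        refine u'.inj ξ ξ₀ ?_ ?_ (by rw [hm, htu'])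
        · exact (hξr.trans hx1.dom_lt).trans_le hx2.1
        · exact hξ2.trans_le hy2.1
      have hcon : ξ < s.dom := hξr.trans_le hx1.dom_lt.le
      rw [hξξ₀] at hcon
      exact absurd hξ1 (not_le_of_gt hcon)
    · exact fun a ha b hb => by
        rw [ha.2, hb.2]

theorem star_prop : HasStarProp (OnePoint Dup) := by
  refine ⟨UU, UU_open, ?_⟩
  intro x y hxy
  have hU0cov : ∀ (p : Dup), ((p : OnePoint Dup) ∈ ⋃₀ UU 0) :=
    fun p => ⟨(fun q : Dup => (q : OnePoint Dup)) '' Wset none p.1 p.2,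
      ⟨none, p.1, p.2, precLt_none _, rfl⟩,
      coe_mem_image_iff.2 (mem_Wset_self (precLt_none _))⟩
  cases x with
  | infty =>
    cases y with
    | infty => exact absurd rfl hxy
    | coe p =>
      refine ⟨0, ⟨(p : OnePoint Dup), Set.mem_insert_of_mem _ rfl, hU0cov p⟩, ?_⟩
      rintro V ⟨r, t, i, hrt, rfl⟩
      refine pair_inter_subsingleton ?_
      rintro ⟨hx, -⟩
      obtain ⟨q, -, hq⟩ := hx
      exact OnePoint.coe_ne_infty _ hq
  | coe p =>
    have hxcov : (({(p : OnePoint Dup), y} : Set (OnePoint Dup)) ∩ ⋃₀ UU 0).Nonempty :=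
      ⟨(p : OnePoint Dup), Set.mem_insert _ _, hU0cov p⟩
    cases y with
    | infty =>
      refine ⟨0, hxcov, ?_⟩
      rintro V ⟨r, t, i, hrt, rfl⟩
      refine pair_inter_subsingleton ?_
      rintro ⟨-, hy⟩
      obtain ⟨q, -, hq⟩ := hy
      exact OnePoint.coe_ne_infty _ hq
    | coe p' =>
      obtain ⟨s, i⟩ := p
      obtain ⟨t, j⟩ := p'
      rcases eq_or_ne s t with rfl | hst
      · -- same node, different signs
        have hij : i ≠ j := by
          intro h
          exact hxy (by rw [h])
        refine ⟨0, hxcov, ?_⟩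
        rintro V ⟨r, u, k, hru, rfl⟩
        refine pair_inter_subsingleton ?_
        rintro ⟨hx, hy⟩
        obtain ⟨-, hx2⟩ := coe_mem_image_iff.1 hx
        obtain ⟨-, hy2⟩ := coe_mem_image_iff.1 hy
        dsimp only at hx2 hy2
        exact hij (hx2.trans hy2.symm)
      · by_cases hcomp : s.le t ∨ t.le s
        · rcases hcomp with hle | hle
          · exact star_sep_lt i j ⟨hle, hst⟩
          · obtain ⟨n, h1, h2⟩ := star_sep_lt j i ⟨hle, Ne.symm hst⟩
            refine ⟨n, ?_, fun V hV => ?_⟩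
            · rwa [Set.pair_comm] at h1
            · rw [Set.pair_comm]
              exact h2 V hV
        · -- incomparable
          refine ⟨0, hxcov, ?_⟩
          rintro V ⟨r, u, k, hru, rfl⟩
          refine pair_inter_subsingleton ?_
          rintro ⟨hx, hy⟩
          obtain ⟨⟨-, hx2⟩, -⟩ := coe_mem_image_iff.1 hx
          obtain ⟨⟨-, hy2⟩, -⟩ := coe_mem_image_iff.1 hy
          exact hcomp (chain_comparable hx2 hy2)

end Star
section NGInfra
open Ordinal

/-- The empty element of `Λ`. -/
noncomputable def lam0 : Lambda where
  toFun _ := 0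
  dom := 0
  countable := by simp
  inj := fun β γ hβ _ _ => absurd hβ (not_lt_zero (a := β))
  coinfinite := by
    refine Set.infinite_coe_iff.1 ?_
    refine Set.infinite_coe_iff.2 (Set.infinite_of_injective_forall_mem
      (f := fun n : ℕ => n) (fun a b h => h) ?_)
    intro n β hβ
    exact absurd hβ (not_lt_zero (a := β))
  junk _ _ := rfl

/-- Extension of `t` by a single fresh value `v` on top. -/
noncomputable def addPoint (t : Lambda) (v : ℕ)
    (hv : ∀ β, β < t.dom → t.toFun β ≠ v) : Lambda where
  toFun β := if β < t.dom then t.toFun β else if β = t.dom then v else 0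
  dom := t.dom + 1
  countable := by
    rw [Ordinal.card_add]
    refine Cardinal.add_le_aleph0.2 ⟨t.countable, ?_⟩
    simpa using Cardinal.one_le_aleph0.le
  inj := by
    intro β γ hβ hγ he
    try simp only [] at he
    have hβ' : β ≤ t.dom := Order.lt_add_one_iff.1 hβ
    have hγ' : γ ≤ t.dom := Order.lt_add_one_iff.1 hγ
    rcases lt_or_eq_of_le hβ' with hβ'' | hβ'' <;> rcases lt_or_eq_of_le hγ' with hγ'' | hγ''
    · rw [if_pos hβ'', if_pos hγ''] at he
      exact t.inj β γ hβ'' hγ'' he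
    · rw [if_pos hβ'', hγ'', if_neg (lt_irrefl _), if_pos rfl] at he
      exact absurd he (hv β hβ'')
    · rw [if_pos hγ'', hβ'', if_neg (lt_irrefl _), if_pos rfl] at he
      exact absurd he.symm (hv γ hγ'')
    · rw [hβ'', hγ'']
  coinfinite := by
    refine ((t.coinfinite.diff (Set.finite_singleton v)).mono ?_)
    rintro n ⟨hn, hnv⟩ β hβ
    show (if β < t.dom then t.toFun β else if β = t.dom then v else 0) ≠ n
    rcases lt_or_eq_of_le (Order.lt_add_one_iff.1 hβ) with h | h
    · rw [if_pos h]; exact hn β h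
    · rw [h, if_neg (lt_irrefl _), if_pos rfl]
      exact fun he => hnv (he ▸ rfl)
  junk := by
    intro β hβ
    have h1 : ¬ β < t.dom := fun h => hβ (h.trans (Order.lt_add_one_iff.2 le_rfl))
    have h2 : β ≠ t.dom := fun h => hβ (h ▸ Order.lt_add_one_iff.2 le_rfl)
    show (if β < t.dom then t.toFun β else if β = t.dom then v else 0) = 0
    rw [if_neg h1, if_neg h2]

lemma addPoint_lt (t : Lambda) (v : ℕ) (hv : ∀ β, β < t.dom → t.toFun β ≠ v) :
    t.lt (addPoint t v hv) := by
  refine Lambda.lt_of_le_of_dom_lt ⟨(Order.lt_add_one_iff.2 le_rfl).le, fun β hβ => ?_⟩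
    (Order.lt_add_one_iff.2 le_rfl)
  exact (if_pos hβ).symm

lemma addPoint_toFun_top (t : Lambda) (v : ℕ) (hv : ∀ β, β < t.dom → t.toFun β ≠ v) :
    (addPoint t v hv).toFun t.dom = v := by
  show (if t.dom < t.dom then _ else if t.dom = t.dom then v else 0) = v
  rw [if_neg (lt_irrefl _), if_pos rfl]

lemma MS_addPoint_top (t : Lambda) (v : ℕ) (hv : ∀ β, β < t.dom → t.toFun β ≠ v) :
    MS t.dom (addPoint t v hv).toFun (addPoint t v hv).dom = {t.dom} := by
  ext ξ
  constructor
  · rintro ⟨h1, h2, -⟩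
    exact le_antisymm (Order.lt_add_one_iff.1 h2) h1
  · rintro rfl
    exact ⟨le_rfl, Order.lt_add_one_iff.2 le_rfl,
      fun η hη1 hη2 => absurd (hη1.trans_lt hη2) (lt_irrefl _)⟩

lemma ell_addPoint_top (t : Lambda) (v : ℕ) (hv : ∀ β, β < t.dom → t.toFun β ≠ v) :
    ell t (addPoint t v hv) = 1 := by
  rw [ell_eq_ncard, MS_addPoint_top, Set.ncard_singleton]

lemma ell_addPoint_of_lt {s t : Lambda} (v : ℕ) (hv : ∀ β, β < t.dom → t.toFun β ≠ v)
    (hst : s.le t) (hwit : ∃ η, s.dom ≤ η ∧ η < t.dom ∧ t.toFun η ≤ v) :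
    ell s (addPoint t v hv) = ell s t := by
  set u := addPoint t v hv with hu
  have hsplit := MS_split (δ := s.dom) (γ := t.dom) (β := u.dom) hst.1
    (Order.lt_add_one_iff.2 le_rfl).le u.toFun
  have hsecond : {ξ ∈ MS t.dom u.toFun u.dom |
      ∀ η, s.dom ≤ η → η < t.dom → u.toFun ξ < u.toFun η} = ∅ := by
    ext ξ
    simp only [Set.mem_setOf_eq, Set.mem_empty_iff_false, iff_false, not_and]
    intro hξ hcond
    have hξd : ξ = t.dom := by
      have := MS_addPoint_top t v hv
      rw [← hu] at this
      rw [this] at hξ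
      exact hξ
    obtain ⟨η, hη1, hη2, hη3⟩ := hwit
    have := hcond η hη1 hη2
    rw [hξd, addPoint_toFun_top] at this
    have huη : u.toFun η = t.toFun η := (addPoint_lt t v hv).1.2 η hη2 |>.symm
    rw [huη] at this
    exact absurd (hη3.trans_lt this) (lt_irrefl _)
  rw [ell_eq_ncard, ell_eq_ncard, hsplit, hsecond, Set.union_empty]
  congr 1
  exact MS_congr (fun ξ _ hξ => ((addPoint_lt t v hv).1.2 ξ hξ).symm)

/-- The top element of a list of `Λ`-nodes. -/
noncomputable def topL (l : List Lambda) : Lambda := l.getD (l.length - 1) lam0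

lemma topL_append (l : List Lambda) (u : Lambda) : topL (l ++ [u]) = u := by
  rw [topL, List.length_append, List.length_singleton, Nat.add_sub_cancel,
    List.getD_append_right _ _ _ _ le_rfl, Nat.sub_self]
  rfl

/-- An upper bound for the minimal values of the top over the members of `l`. -/
noncomputable def theta (l : List Lambda) : ℕ :=
  (l.map (fun s => sInf {n : ℕ | ∃ ξ : Ordinal.{0}, s.dom ≤ ξ ∧ ξ < (topL l).dom ∧
    (topL l).toFun ξ = n})).foldr max 0

lemma le_foldr_max (l : List ℕ) : ∀ a ∈ l, a ≤ l.foldr max 0 := by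
  induction l with
  | nil => intro a ha; exact absurd ha (List.not_mem_nil (a := a))
  | cons b l IH =>
    intro a ha
    rcases List.mem_cons.1 ha with rfl | ha'
    · exact le_max_left _ _
    · exact (IH a ha').trans (le_max_right _ _)

/-- A fresh value for the plain one-point extension. -/
noncomputable def freshVal (l : List Lambda) (res : List ℕ) : ℕ :=
  sInf {v : ℕ | (∀ β, β < (topL l).dom → (topL l).toFun β ≠ v) ∧ v ∉ res ∧ theta l < v}

lemma freshVal_mem (l : List Lambda) (res : List ℕ) :
    (∀ β, β < (topL l).dom → (topL l).toFun β ≠ freshVal l res) ∧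
      freshVal l res ∉ res ∧ theta l < freshVal l res := by
  have hne : {v : ℕ | (∀ β, β < (topL l).dom → (topL l).toFun β ≠ v) ∧ v ∉ res ∧
      theta l < v}.Nonempty := by
    have hinf := ((topL l).coinfinite.diff (res.finite_toSet.union
      (Set.finite_Iic (theta l))))
    obtain ⟨v, hv1, hv2⟩ := hinf.nonempty
    simp only [Set.mem_union, Set.mem_Iic, not_or, not_le] at hv2
    exact ⟨v, hv1, hv2.1, hv2.2⟩
  exact Nat.sInf_mem hne

/-- The plain one-point extension used when no useful node exists. -/
noncomputable def plainExt (l : List Lambda) (res : List ℕ) : Lambda :=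
  addPoint (topL l) (freshVal l res) (freshVal_mem l res).1

/-- A reserved value, kept out of all later nodes of the construction. -/
noncomputable def reserve (t : Lambda) (res : List ℕ) : ℕ :=
  sInf {v : ℕ | (∀ β, β < t.dom → t.toFun β ≠ v) ∧ v ∉ res}

lemma reserve_mem (t : Lambda) (res : List ℕ) :
    (∀ β, β < t.dom → t.toFun β ≠ reserve t res) ∧ reserve t res ∉ res := by
  have hne : {v : ℕ | (∀ β, β < t.dom → t.toFun β ≠ v) ∧ v ∉ res}.Nonempty := by
    obtain ⟨v, hv1, hv2⟩ := (t.coinfinite.diff res.finite_toSet).nonempty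
    exact ⟨v, hv1, hv2⟩
  exact Nat.sInf_mem hne

end NGInfra
section ChainLim
open Ordinal

attribute [local instance] Classical.propDecidable

/-- Monotone enumeration hypothesis. -/
def ChainMono (T : ℕ → Lambda) : Prop := ∀ k, (T k).lt (T (k+1))

lemma ChainMono.le_of_le {T : ℕ → Lambda} (h : ChainMono T) {i j : ℕ} (hij : i ≤ j) :
    (T i).le (T j) := by
  induction hij with
  | refl => exact Lambda.le_refl _
  | step _ IH => exact Lambda.le_trans IH (h _).1

lemma ChainMono.lt_of_lt {T : ℕ → Lambda} (h : ChainMono T) {i j : ℕ} (hij : i < j) :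
    (T i).lt (T j) :=
  Lambda.lt_of_lt_of_le' (h i) (h.le_of_le (Nat.succ_le_of_lt hij))

/-- The limit of a strictly increasing chain with jointly coinfinite values. -/
noncomputable def chainLim (T : ℕ → Lambda) (hmono : ChainMono T)
    (hco : {x : ℕ | ∀ k, ∀ β, β < (T k).dom → (T k).toFun β ≠ x}.Infinite) : Lambda where
  toFun β := if h : ∃ k, β < (T k).dom then (T (Nat.find h)).toFun β else 0
  dom := ⨆ k, (T k).dom
  countable := by
    by_contra hc
    push_neg at hc
    have h1 : Cardinal.aleph 1 ≤ (⨆ k, (T k).dom).card := by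
      rw [← Cardinal.succ_aleph0]
      exact Order.succ_le_of_lt hc
    have h2 : (Cardinal.aleph 1).ord ≤ ⨆ k, (T k).dom := by
      rw [Cardinal.ord_le]
      simpa using h1
    have h3 : ⨆ k, (T k).dom < (Cardinal.aleph 1).ord := by
      refine Ordinal.iSup_lt_ord_lift ?_ ?_
      · rw [Cardinal.isRegular_aleph_one.cof_eq]
        simpa using Cardinal.aleph0_lt_aleph_one
      · intro k
        rw [Cardinal.lt_ord]
        exact lt_of_le_of_lt (by simpa using (T k).countable)
          (by simpa using Cardinal.aleph0_lt_aleph_one)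
    exact absurd h2 (not_le_of_gt h3)
  inj := by
    intro β γ hβ hγ he
    try simp only [] at he
    have hβ' : ∃ k, β < (T k).dom := by
      rw [lt_ciSup_iff (Ordinal.bddAbove_range _)] at hβ
      exact hβ
    have hγ' : ∃ k, γ < (T k).dom := by
      rw [lt_ciSup_iff (Ordinal.bddAbove_range _)] at hγ
      exact hγ
    rw [dif_pos hβ', dif_pos hγ'] at he
    set k := max (Nat.find hβ') (Nat.find hγ') with hk
    have h1 : (T (Nat.find hβ')).toFun β = (T k).toFun β :=
      (hmono.le_of_le (le_max_left _ _)).2 β (Nat.find_spec hβ')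
    have h2 : (T (Nat.find hγ')).toFun γ = (T k).toFun γ :=
      (hmono.le_of_le (le_max_right _ _)).2 γ (Nat.find_spec hγ')
    refine (T k).inj β γ ?_ ?_ ?_
    · exact (Nat.find_spec hβ').trans_le (hmono.le_of_le (le_max_left _ _)).1
    · exact (Nat.find_spec hγ').trans_le (hmono.le_of_le (le_max_right _ _)).1
    · rw [← h1, ← h2, he]
  coinfinite := by
    refine hco.mono ?_
    intro x hx β hβ
    show (if h : ∃ k, β < (T k).dom then (T (Nat.find h)).toFun β else 0) ≠ x
    by_cases h : ∃ k, β < (T k).dom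
    · rw [dif_pos h]
      exact hx (Nat.find h) β (Nat.find_spec h)
    · rw [dif_neg h]
      rw [lt_ciSup_iff (Ordinal.bddAbove_range _)] at hβ
      exact absurd hβ h
  junk := by
    intro β hβ
    have h : ¬ ∃ k, β < (T k).dom := by
      intro ⟨k, hk⟩
      exact hβ (hk.trans_le (le_ciSup (Ordinal.bddAbove_range _) k))
    show (if h : ∃ k, β < (T k).dom then (T (Nat.find h)).toFun β else 0) = 0
    rw [dif_neg h]

variable {T : ℕ → Lambda} {hmono : ChainMono T}
  {hco : {x : ℕ | ∀ k, ∀ β, β < (T k).dom → (T k).toFun β ≠ x}.Infinite}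

lemma chainLim_le (k : ℕ) : (T k).le (chainLim T hmono hco) := by
  refine ⟨le_ciSup (Ordinal.bddAbove_range _) k, fun β hβ => ?_⟩
  have h : ∃ m, β < (T m).dom := ⟨k, hβ⟩
  show _ = (if h : ∃ m, β < (T m).dom then (T (Nat.find h)).toFun β else 0)
  rw [dif_pos h]
  rcases le_total (Nat.find h) k with h' | h'
  · exact ((hmono.le_of_le h').2 β (Nat.find_spec h)).symm
  · exact (hmono.le_of_le h').2 β hβ

lemma chainLim_lt (k : ℕ) : (T k).lt (chainLim T hmono hco) := by
  refine Lambda.lt_of_le_of_dom_lt (chainLim_le k) ?_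
  exact lt_of_lt_of_le (hmono k).dom_lt ((chainLim_le (k+1)).1)

/-- Parities of `ℓ` pass to the limit of the chain. -/
lemma ell_chainLim_odd (s : Lambda) (k₀ : ℕ)
    (h : ∀ m, k₀ ≤ m → Odd (ell s (T m))) : Odd (ell s (chainLim T hmono hco)) := by
  set tst := chainLim T hmono hco with htst
  have hfin : (MS s.dom tst.toFun tst.dom).Finite := MS_finite _ _ _
  have hbound : ∃ k₁, ∀ ξ ∈ MS s.dom tst.toFun tst.dom, ξ < (T k₁).dom := by
    rcases Set.eq_empty_or_nonempty (MS s.dom tst.toFun tst.dom) with he | hne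
    · exact ⟨0, fun ξ hξ => absurd (he ▸ hξ) (Set.notMem_empty ξ)⟩
    · have hmax : sSup (MS s.dom tst.toFun tst.dom) ∈ MS s.dom tst.toFun tst.dom :=
        hne.csSup_mem hfin
      have hlt : sSup (MS s.dom tst.toFun tst.dom) < ⨆ k, (T k).dom := hmax.2.1
      rw [lt_ciSup_iff (Ordinal.bddAbove_range _)] at hlt
      obtain ⟨k₁, hk₁⟩ := hlt
      exact ⟨k₁, fun ξ hξ => lt_of_le_of_lt (le_csSup hfin.bddAbove hξ) hk₁⟩
  obtain ⟨k₁, hk₁⟩ := hbound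
  set m := max k₀ k₁ with hm
  have hWlt : (T m).dom ≤ tst.dom := (chainLim_le m).1
  have h1 : MS s.dom tst.toFun tst.dom = MS s.dom tst.toFun (T m).dom := by
    rw [MS_inter_Iio hWlt tst.toFun]
    ext ξ
    constructor
    · intro hξ
      exact ⟨hξ, lt_of_lt_of_le (hk₁ ξ hξ) (hmono.le_of_le (le_max_right _ _)).1⟩
    · rintro ⟨hξ, -⟩
      exact hξ
  have h2 : MS s.dom tst.toFun (T m).dom = MS s.dom (T m).toFun (T m).dom :=
    MS_congr (fun ξ _ hξ => (((chainLim_le m).2) ξ hξ).symm)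
  have h3 := h m (le_max_left _ _)
  rw [ell_eq_ncard] at h3 ⊢
  rw [h1, h2]
  exact h3

end ChainLim
section NGRec
open Ordinal

attribute [local instance] Classical.propDecidable

def eOf (b : Bool) : ℤˣ := if b then 1 else -1

noncomputable def bOf (e : ℤˣ) : Bool := if e = 1 then true else false

lemma eOf_bOf (e : ℤˣ) : eOf (bOf e) = e := by
  rcases Int.units_eq_one_or e with rfl | rfl
  · rw [bOf, if_pos rfl]; rfl
  · rw [bOf, if_neg (by decide)]; rfl

variable (nn : Lambda → ℕ) (ee : Lambda → ℤˣ) (qq : Lambda → Option Lambda)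

/-- A useful extension for the task `τ = (n, b, α)` over the history `(l, res)`. -/
def GoodExt (l : List Lambda) (res : List ℕ) (τ : ℕ × Bool × ℕ) (u : Lambda) : Prop :=
  (topL l).lt u ∧
  (∀ x ∈ res, ∀ β, β < u.dom → u.toFun β ≠ x) ∧
  (∀ s ∈ l, Odd (ell s u)) ∧
  nn u = τ.1 ∧ ee u = eOf τ.2.1 ∧ domOpt (qq u) < (l.getD τ.2.2 lam0).dom

noncomputable def ngNext (l : List Lambda) (res : List ℕ) (k : ℕ) : Lambda :=
  (Encodable.decode (α := ℕ × Bool × ℕ) k.unpair.1).elim (plainExt l res)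
    (fun τ => if h : ∃ u, GoodExt nn ee qq l res τ u then h.choose else plainExt l res)

noncomputable def ngState : ℕ → List Lambda × List ℕ
  | 0 => ([lam0], [])
  | (k+1) =>
    let st := ngState k
    let u := ngNext nn ee qq st.1 st.2 k
    (st.1 ++ [u], st.2 ++ [reserve u st.2])

lemma ngState_succ (k : ℕ) : ngState nn ee qq (k+1) =
    ((ngState nn ee qq k).1 ++ [ngNext nn ee qq (ngState nn ee qq k).1 (ngState nn ee qq k).2 k],
      (ngState nn ee qq k).2 ++
        [reserve (ngNext nn ee qq (ngState nn ee qq k).1 (ngState nn ee qq k).2 k)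
          (ngState nn ee qq k).2]) := rfl

lemma ngState_len (k : ℕ) : (ngState nn ee qq k).1.length = k + 1 := by
  induction k with
  | zero => rfl
  | succ k IH =>
    rw [ngState_succ]
    simp only [List.length_append, List.length_singleton, IH]

noncomputable def chainEl (k : ℕ) : Lambda := topL (ngState nn ee qq k).1

lemma chainEl_succ (k : ℕ) : chainEl nn ee qq (k+1) =
    ngNext nn ee qq (ngState nn ee qq k).1 (ngState nn ee qq k).2 k := by
  rw [chainEl, ngState_succ]
  exact topL_append _ _

lemma chainEl_eq_getD : ∀ (k' k : ℕ), k ≤ k' →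
    (ngState nn ee qq k').1.getD k lam0 = chainEl nn ee qq k := by
  intro k'
  induction k' with
  | zero =>
    intro k hk
    rw [Nat.le_zero.1 hk]
    rfl
  | succ k' IH =>
    intro k hk
    rcases Nat.lt_succ_iff_lt_or_eq.1 (Nat.lt_succ_of_le hk) with h' | h'
    · rw [ngState_succ, List.getD_append _ _ _ _ (by rw [ngState_len]; omega)]
      exact IH k (by omega)
    · subst h'
      rw [chainEl, topL, ngState_len]
      simp only [Nat.add_sub_cancel]

lemma chainEl_mem {k i : ℕ} (h : i ≤ k) :
    chainEl nn ee qq i ∈ (ngState nn ee qq k).1 := by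
  rw [← chainEl_eq_getD nn ee qq k i h,
    List.getD_eq_getElem _ _ (by rw [ngState_len]; omega)]
  exact List.getElem_mem _

lemma mem_ngState {k : ℕ} {s : Lambda} (h : s ∈ (ngState nn ee qq k).1) :
    ∃ i, i ≤ k ∧ s = chainEl nn ee qq i := by
  obtain ⟨i, hi, heq⟩ := List.mem_iff_getElem.1 h
  rw [ngState_len] at hi
  refine ⟨i, by omega, ?_⟩
  rw [← heq, ← List.getD_eq_getElem _ lam0, chainEl_eq_getD nn ee qq k i (by omega)]

lemma res_mono {k k' : ℕ} (h : k ≤ k') :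
    ∀ x ∈ (ngState nn ee qq k).2, x ∈ (ngState nn ee qq k').2 := by
  induction h with
  | refl => exact fun x hx => hx
  | step _ IH =>
    intro x hx
    rw [ngState_succ]
    exact List.mem_append_left _ (IH x hx)

/-- The main invariant of the construction. -/
lemma ngInv (k : ℕ) :
    (∀ i j, i < j → j ≤ k → (chainEl nn ee qq i).lt (chainEl nn ee qq j)) ∧
    (∀ i j, i < j → j ≤ k → Odd (ell (chainEl nn ee qq i) (chainEl nn ee qq j))) ∧
    (∀ x ∈ (ngState nn ee qq k).2, ∀ β, β < (chainEl nn ee qq k).dom →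
      (chainEl nn ee qq k).toFun β ≠ x) := by
  induction k with
  | zero =>
    refine ⟨fun i j hij hj => by omega, fun i j hij hj => by omega, ?_⟩
    intro x hx
    exact absurd hx (List.not_mem_nil (a := x))
  | succ k IH =>
    obtain ⟨IH1, IH2, IH3⟩ := IH
    -- facts about the new element
    have hUfacts : (chainEl nn ee qq k).lt (chainEl nn ee qq (k+1)) ∧
        (∀ x ∈ (ngState nn ee qq k).2, ∀ β, β < (chainEl nn ee qq (k+1)).dom →
          (chainEl nn ee qq (k+1)).toFun β ≠ x) ∧
        (∀ s ∈ (ngState nn ee qq k).1, Odd (ell s (chainEl nn ee qq (k+1)))) := by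
      have hplain : chainEl nn ee qq (k+1) =
            plainExt (ngState nn ee qq k).1 (ngState nn ee qq k).2 →
          (chainEl nn ee qq k).lt (chainEl nn ee qq (k+1)) ∧
          (∀ x ∈ (ngState nn ee qq k).2, ∀ β, β < (chainEl nn ee qq (k+1)).dom →
            (chainEl nn ee qq (k+1)).toFun β ≠ x) ∧
          (∀ s ∈ (ngState nn ee qq k).1, Odd (ell s (chainEl nn ee qq (k+1)))) := by
        intro h'
        rw [h']
        unfold plainExt
        have hfm := freshVal_mem (ngState nn ee qq k).1 (ngState nn ee qq k).2
        refine ⟨addPoint_lt _ _ _, ?_, ?_⟩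
        · intro x hx β hβ
          rcases lt_or_eq_of_le (Order.lt_add_one_iff.1 hβ) with h | h
          · intro he
            refine IH3 x hx β h ?_
            rw [← he]
            exact ((addPoint_lt _ _ _).1.2 β h)
          · rw [h, addPoint_toFun_top]
            intro he
            exact hfm.2.1 (he ▸ hx)
        · intro s hs
          obtain ⟨i, hik, rfl⟩ := mem_ngState nn ee qq hs
          rcases lt_or_eq_of_le hik with hik' | hik'
          · have hlt : (chainEl nn ee qq i).lt (topL (ngState nn ee qq k).1) :=
              IH1 i k hik' le_rfl
            rw [ell_addPoint_of_lt _ _ hlt.1 ?wit]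
            · exact IH2 i k hik' le_rfl
            case wit =>
              -- witness: the minimal value of the top on the final segment
              have hne : {n : ℕ | ∃ ξ : Ordinal.{0},
                  (chainEl nn ee qq i).dom ≤ ξ ∧ ξ < (topL (ngState nn ee qq k).1).dom ∧
                  (topL (ngState nn ee qq k).1).toFun ξ = n}.Nonempty :=
                ⟨_, (chainEl nn ee qq i).dom, le_rfl, hlt.dom_lt, rfl⟩
              obtain ⟨ξ, hξ1, hξ2, hξ3⟩ := Nat.sInf_mem hne
              refine ⟨ξ, hξ1, hξ2, ?_⟩
              rw [hξ3]
              refine le_trans ?_ hfm.2.2.le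
              refine le_foldr_max _ _ ?_
              exact List.mem_map_of_mem (chainEl_mem nn ee qq hik)
          · subst hik'
            rw [show chainEl nn ee qq i = topL (ngState nn ee qq i).1 from rfl,
              ell_addPoint_top]
            exact ⟨0, rfl⟩
      have hck : chainEl nn ee qq (k+1) =
          ngNext nn ee qq (ngState nn ee qq k).1 (ngState nn ee qq k).2 k := chainEl_succ _ _ _ k
      rcases hdec : Encodable.decode (α := ℕ × Bool × ℕ) (Nat.unpair k).1 with _ | τ
      · rw [ngNext, hdec] at hck
        exact hplain hck
      · rw [ngNext, hdec] at hck
        simp only [Option.elim_some] at hck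
        by_cases hex : ∃ u, GoodExt nn ee qq (ngState nn ee qq k).1 (ngState nn ee qq k).2 τ u
        · rw [dif_pos hex] at hck
          have hspec := hex.choose_spec
          rw [← hck] at hspec
          obtain ⟨h1, h2, h3, -, -, -⟩ := hspec
          exact ⟨h1, fun x hx β hβ => h2 x hx β hβ, h3⟩
        · rw [dif_neg hex] at hck
          exact hplain hck
    obtain ⟨hF1, hF2, hF3⟩ := hUfacts
    refine ⟨?_, ?_, ?_⟩
    · intro i j hij hj
      rcases Nat.lt_succ_iff_lt_or_eq.1 (Nat.lt_succ_of_le hj) with h' | h'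
      · exact IH1 i j hij (by omega)
      · subst h'
        rcases lt_or_eq_of_le (Nat.lt_succ_iff.1 hij) with h'' | h''
        · exact Lambda.lt_trans (IH1 i k h'' le_rfl) hF1
        · subst h''; exact hF1
    · intro i j hij hj
      rcases Nat.lt_succ_iff_lt_or_eq.1 (Nat.lt_succ_of_le hj) with h' | h'
      · exact IH2 i j hij (by omega)
      · subst h'
        exact hF3 _ (chainEl_mem nn ee qq (Nat.lt_succ_iff.1 hij))
    · rw [ngState_succ]
      intro x hx β hβ
      rcases List.mem_append.1 hx with hx' | hx'
      · exact hF2 x hx' β hβ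
      · rw [List.mem_singleton.1 hx']
        rw [chainEl_succ] at hβ ⊢
        exact (reserve_mem _ _).1 β hβ

end NGRec
section NGMain
open Ordinal

set_option maxHeartbeats 1000000 in
theorem not_gruenhage : ¬ Gruenhage (OnePoint Dup) := by
  rintro ⟨UG, RG, hopen, hsep, hR⟩
  -- Choose separators for the twin pairs.
  have hpair : ∀ u : Lambda, ∃ (n : ℕ) (e : ℤˣ) (V : Set (OnePoint Dup)),
      V ∈ UG n ∧ ((⟨u, e⟩ : Dup) : OnePoint Dup) ∈ V ∧
        ((⟨u, -e⟩ : Dup) : OnePoint Dup) ∉ V := by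
    intro u
    have hne : ((⟨u, 1⟩ : Dup) : OnePoint Dup) ≠ ((⟨u, -1⟩ : Dup) : OnePoint Dup) := by
      intro h
      have h2 := Option.some_injective _ h
      have h3 : (1 : ℤˣ) = -1 := congrArg Prod.snd h2
      exact absurd h3 (by decide)
    obtain ⟨n, V, hV, w, hw⟩ := hsep _ _ hne
    have hwmem : w ∈ ({((⟨u, 1⟩ : Dup) : OnePoint Dup),
        ((⟨u, -1⟩ : Dup) : OnePoint Dup)} : Set (OnePoint Dup)) ∩ V := by
      rw [hw]; rfl
    rcases hwmem.1 with h1 | h1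
    · refine ⟨n, 1, V, hV, h1 ▸ hwmem.2, fun hmem => ?_⟩
      have : ((⟨u, -1⟩ : Dup) : OnePoint Dup) ∈ ({((⟨u, 1⟩ : Dup) : OnePoint Dup),
          ((⟨u, -1⟩ : Dup) : OnePoint Dup)} : Set (OnePoint Dup)) ∩ V :=
        ⟨Set.mem_insert_of_mem _ rfl, hmem⟩
      rw [hw] at this
      exact hne (h1 ▸ this.symm)
    · refine ⟨n, -1, V, hV, h1 ▸ hwmem.2, fun hmem => ?_⟩
      rw [neg_neg] at hmem
      have : ((⟨u, 1⟩ : Dup) : OnePoint Dup) ∈ ({((⟨u, 1⟩ : Dup) : OnePoint Dup),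
          ((⟨u, -1⟩ : Dup) : OnePoint Dup)} : Set (OnePoint Dup)) ∩ V :=
        ⟨Set.mem_insert _ _, hmem⟩
      rw [hw] at this
      exact hne (h1 ▸ this)
  choose nn ee VV hVmem hein heout using hpair
  -- Choose the tails of the separators.
  have hq : ∀ u : Lambda, ∃ q : Option Lambda, precLt q u ∧
      Wset q u (ee u) ⊆ (fun p : Dup => (p : OnePoint Dup)) ⁻¹' VV u := by
    intro u
    refine exists_Wset_subset ?_ ?_
    · exact (hopen _ _ (hVmem u)).preimage OnePoint.continuous_coe
    · exact hein u
  choose qq hqq hWsub using hq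
  -- Run the construction.
  set T : ℕ → Lambda := chainEl nn ee qq with hT
  have hmono : ChainMono T := fun k => (ngInv nn ee qq (k+1)).1 k (k+1) (by omega) le_rfl
  -- The reserved values witness joint coinfiniteness.
  set w : ℕ → ℕ := fun k => reserve (ngNext nn ee qq (ngState nn ee qq k).1
    (ngState nn ee qq k).2 k) (ngState nn ee qq k).2 with hwdef
  have hwres : ∀ k, w k ∈ (ngState nn ee qq (k+1)).2 := by
    intro k
    rw [ngState_succ]
    exact List.mem_append_right _ (List.mem_singleton_self _)
  have hwfresh : ∀ k m β, β < (T m).dom → (T m).toFun β ≠ w k := by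
    intro k m β hβ
    rcases le_or_gt m k with hmk | hmk
    · -- values of earlier nodes are values of the (k+1)-st
      have hle : (T m).le (T (k+1)) := hmono.le_of_le (by omega)
      rw [hle.2 β hβ]
      have : β < (T (k+1)).dom := hβ.trans_le hle.1
      rw [hT] at this ⊢
      rw [chainEl_succ] at this ⊢
      exact (reserve_mem _ _).1 β this
    · have := (ngInv nn ee qq m).2.2 (w k) (res_mono nn ee qq (by omega) _ (hwres k)) β hβ
      exact this
  have hwinj : Function.Injective w := by
    intro k k' he
    by_contra hne
    rcases Ne.lt_or_gt hne with h | h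
    · have h1 : w k ∈ (ngState nn ee qq k').2 := res_mono nn ee qq (by omega) _ (hwres k)
      have h2 : w k' ∉ (ngState nn ee qq k').2 :=
        (reserve_mem (ngNext nn ee qq (ngState nn ee qq k').1
          (ngState nn ee qq k').2 k') (ngState nn ee qq k').2).2
      exact h2 (he ▸ h1)
    · have h1 : w k' ∈ (ngState nn ee qq k).2 := res_mono nn ee qq (by omega) _ (hwres k')
      have h2 : w k ∉ (ngState nn ee qq k).2 :=
        (reserve_mem (ngNext nn ee qq (ngState nn ee qq k).1
          (ngState nn ee qq k).2 k) (ngState nn ee qq k).2).2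
      exact h2 (he.symm ▸ h1)
  have hco : {x : ℕ | ∀ k, ∀ β, β < (T k).dom → (T k).toFun β ≠ x}.Infinite :=
    Set.infinite_of_injective_forall_mem hwinj
      (fun k => fun m β hβ => hwfresh k m β hβ)
  set tst : Lambda := chainLim T hmono hco with htst
  -- the task data of the limit
  have hα₀ : ∃ α₀, domOpt (qq tst) < (T α₀).dom := by
    have h0 : 0 < tst.dom :=
      lt_of_le_of_lt (zero_le (a := (T 0).dom)) (chainLim_lt 0).dom_lt
    have h1 : domOpt (qq tst) < tst.dom := precLt_dom_lt (hqq tst) h0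
    have h2 : domOpt (qq tst) < ⨆ k, (T k).dom := h1
    rw [lt_ciSup_iff (Ordinal.bddAbove_range _)] at h2
    exact h2
  obtain ⟨α₀, hα₀⟩ := hα₀
  -- the witness lemma
  have tstar_good : ∀ (k : ℕ) (τ : ℕ × Bool × ℕ), nn tst = τ.1 → ee tst = eOf τ.2.1 →
      τ.2.2 ≤ k → domOpt (qq tst) < (T τ.2.2).dom →
      GoodExt nn ee qq (ngState nn ee qq k).1 (ngState nn ee qq k).2 τ tst := by
    intro k τ h1 h2 h3 h4
    refine ⟨chainLim_lt k, ?_, ?_, h1, h2, ?_⟩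
    · intro x hx β hβ
      have hβ' : β < ⨆ m, (T m).dom := hβ
      rw [lt_ciSup_iff (Ordinal.bddAbove_range _)] at hβ'
      obtain ⟨m, hm⟩ := hβ'
      have hm' : β < (T (max m k)).dom := hm.trans_le (hmono.le_of_le (le_max_left _ _)).1
      have hval : tst.toFun β = (T (max m k)).toFun β :=
        ((chainLim_le (max m k)).2 β hm').symm
      rw [hval]
      exact (ngInv nn ee qq (max m k)).2.2 x
        (res_mono nn ee qq (le_max_right _ _) x hx) β hm'
    · intro s hs
      obtain ⟨i, hik, rfl⟩ := mem_ngState nn ee qq hs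
      exact ell_chainLim_odd _ (i+1)
        (fun m hm => (ngInv nn ee qq m).2.1 i m (by omega) le_rfl)
    · rwa [chainEl_eq_getD nn ee qq k τ.2.2 h3]
  -- extract the three nodes
  have hstep : ∀ (k : ℕ) (τ : ℕ × Bool × ℕ),
      Encodable.decode (α := ℕ × Bool × ℕ) k.unpair.1 = some τ →
      (∃ u, GoodExt nn ee qq (ngState nn ee qq k).1 (ngState nn ee qq k).2 τ u) →
      GoodExt nn ee qq (ngState nn ee qq k).1 (ngState nn ee qq k).2 τ (T (k+1)) := by
    intro k τ hdec hex
    have hck : T (k+1) =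
        ngNext nn ee qq (ngState nn ee qq k).1 (ngState nn ee qq k).2 k := chainEl_succ _ _ _ k
    rw [ngNext, hdec] at hck
    simp only [Option.elim_some] at hck
    rw [dif_pos hex] at hck
    rw [hck]
    exact hex.choose_spec
  set e' : ℤˣ := ee tst with he'
  set n' : ℕ := nn tst with hn'
  have heOf : eOf (bOf e') = e' := eOf_bOf e'
  -- stage k₁ : get z
  set k₁ : ℕ := Nat.pair (Encodable.encode ((n', bOf e', α₀) : ℕ × Bool × ℕ)) α₀ with hk₁def
  have hk₁α : α₀ ≤ k₁ := Nat.right_le_pair _ _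
  have hdec₁ : Encodable.decode (α := ℕ × Bool × ℕ) k₁.unpair.1 = some (n', bOf e', α₀) := by
    rw [hk₁def, Nat.unpair_pair]
    exact Encodable.encodek _
  have hGz := hstep k₁ _ hdec₁ ⟨tst, tstar_good k₁ _ rfl heOf.symm hk₁α hα₀⟩
  set z : Lambda := T (k₁ + 1) with hz
  -- stage k₂ : get c'
  set k₂ : ℕ := Nat.pair (Encodable.encode ((n', bOf e', k₁+1) : ℕ × Bool × ℕ)) (k₁+1)
    with hk₂def
  have hk₂α : k₁ + 1 ≤ k₂ := Nat.right_le_pair _ _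
  have hdec₂ : Encodable.decode (α := ℕ × Bool × ℕ) k₂.unpair.1 = some (n', bOf e', k₁+1) := by
    rw [hk₂def, Nat.unpair_pair]
    exact Encodable.encodek _
  have hα₂ : domOpt (qq tst) < (T (k₁+1)).dom :=
    hα₀.trans_le (hmono.le_of_le (by omega)).1
  have hGc' := hstep k₂ _ hdec₂ ⟨tst, tstar_good k₂ _ rfl heOf.symm hk₂α hα₂⟩
  set c1 : Lambda := T (k₂ + 1) with hc1
  -- stage k₃ : get c''
  set k₃ : ℕ := Nat.pair (Encodable.encode ((n', bOf e', k₁+1) : ℕ × Bool × ℕ)) (k₂+1)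
    with hk₃def
  have hk₃α : k₂ + 1 ≤ k₃ := Nat.right_le_pair _ _
  have hdec₃ : Encodable.decode (α := ℕ × Bool × ℕ) k₃.unpair.1 = some (n', bOf e', k₁+1) := by
    rw [hk₃def, Nat.unpair_pair]
    exact Encodable.encodek _
  have hGc'' := hstep k₃ _ hdec₃ ⟨tst, tstar_good k₃ _ rfl heOf.symm (le_trans (le_trans hk₂α (Nat.le_succ k₂)) hk₃α) hα₂⟩
  set c2 : Lambda := T (k₃ + 1) with hc2
  -- basic facts
  have hzc1 : z.lt c1 := hmono.lt_of_lt (by omega)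
  have hzc2 : z.lt c2 := hmono.lt_of_lt (by omega)
  have hc1c2 : c1.lt c2 := hmono.lt_of_lt (by omega)
  obtain ⟨-, -, hGc'par, hGc'n, hGc'e, hGc'reach⟩ := hGc'
  obtain ⟨-, -, hGc''par, hGc''n, hGc''e, hGc''reach⟩ := hGc''
  obtain ⟨-, -, -, hGzn, hGze, -⟩ := hGz
  rw [chainEl_eq_getD nn ee qq k₂ (k₁+1) hk₂α] at hGc'reach
  rw [chainEl_eq_getD nn ee qq k₃ (k₁+1) (by omega)] at hGc''reach
  rw [heOf] at hGc'e hGc''e hGze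
  -- parities
  have hoddz1 : Odd (ell z c1) :=
    hGc'par z (chainEl_mem nn ee qq (show k₁ + 1 ≤ k₂ by omega))
  have hoddz2 : Odd (ell z c2) :=
    hGc''par z (chainEl_mem nn ee qq (show k₁ + 1 ≤ k₃ by omega))
  have hodd12 : Odd (ell c1 c2) :=
    hGc''par c1 (chainEl_mem nn ee qq (show k₂ + 1 ≤ k₃ by omega))
  -- memberships
  have hsign : ∀ {a b : Lambda}, Odd (ell a b) → (-1 : ℤˣ) ^ ell a b * e' = -e' := by
    intro a b hodd
    rw [hodd.neg_one_pow, neg_one_mul]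
  have hm1 : ((⟨z, -e'⟩ : Dup) : OnePoint Dup) ∈ VV c1 := by
    refine hWsub c1 ⟨⟨?_, hzc1.1⟩, ?_⟩
    · exact precLt_of_le (hqq c1) hzc1.1 hGc'reach
    · rw [hGc'e]
      exact (hsign hoddz1).symm
  have hm2 : ((⟨z, -e'⟩ : Dup) : OnePoint Dup) ∈ VV c2 := by
    refine hWsub c2 ⟨⟨?_, hzc2.1⟩, ?_⟩
    · exact precLt_of_le (hqq c2) hzc2.1 hGc''reach
    · rw [hGc''e]
      exact (hsign hoddz2).symm
  have hm3 : ((⟨c1, -e'⟩ : Dup) : OnePoint Dup) ∈ VV c2 := by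
    refine hWsub c2 ⟨⟨?_, hc1c2.1⟩, ?_⟩
    · exact precLt_of_le (hqq c2) hc1c2.1 (hGc''reach.trans hzc1.dom_lt)
    · rw [hGc''e]
      exact (hsign hodd12).symm
  -- distinctness
  have hne12 : VV c1 ≠ VV c2 := by
    intro h
    have := heout c1
    rw [hGc'e] at this
    exact this (h ▸ hm3)
  -- the contradiction
  have hGc'n' : nn c1 = n' := hGc'n
  have hGc''n' : nn c2 = n' := hGc''n
  have hGzn' : nn z = n' := hGzn
  have hVc1 : VV c1 ∈ UG n' := by rw [← hGc'n']; exact hVmem c1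
  have hVc2 : VV c2 ∈ UG n' := by rw [← hGc''n']; exact hVmem c2
  have hVz : VV z ∈ UG n' := by rw [← hGzn']; exact hVmem z
  have hRR : VV c1 ∩ VV c2 = RG n' := hR n' (VV c1) hVc1 (VV c2) hVc2 hne12
  have hp₀ : ((⟨z, -e'⟩ : Dup) : OnePoint Dup) ∈ RG n' := hRR ▸ ⟨hm1, hm2⟩
  have hzout : ((⟨z, -e'⟩ : Dup) : OnePoint Dup) ∉ VV z := by
    have := heout z
    rwa [hGze] at this
  by_cases hzc1eq : VV z = VV c1
  · exact hzout (hzc1eq ▸ hm1)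
  · have hRz : VV z ∩ VV c1 = RG n' := hR n' (VV z) hVz (VV c1) hVc1 hzc1eq
    rw [← hRz] at hp₀
    exact hzout hp₀.1

end NGMain


/-- The one-point compactification `K` of the `Λ`-duplicate `D` is a scattered compact
Hausdorff space which has property (*) but is not Gruenhage. -/
theorem onePoint_dup_properties :
    (∀ E : Set (OnePoint Dup), E.Nonempty →
      ∃ x ∈ E, ∃ U : Set (OnePoint Dup), IsOpen U ∧ U ∩ E = {x}) ∧
    CompactSpace (OnePoint Dup) ∧
    T2Space (OnePoint Dup) ∧
    HasStarProp (OnePoint Dup) ∧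
    ¬ Gruenhage (OnePoint Dup) := by
  exact ⟨scattered_onePoint, inferInstance, inferInstance, star_prop, not_gruenhage⟩
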